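/- arXiv:2212.06766 — 2 statements merged into one kernel-verified Lean document; each statement's English description precedes it below -/
import Mathlib

section
/- Let A be an abelian group generated by two elements a, b whose orders are relatively prime, and let φ, ψ : A → S_n be homomorphisms with φ(a) = ψ(a) = σ, where σ = σ₁⋯σ_l with each σᵢ a product of kᵢ pairwise disjoint cycles of length dᵢ and the dᵢ pairwise distinct. Write φ(b) = μ₀π₁⋯π_l and ψ(b) = μ₀'π₁'⋯π_l' with μ₀, μ₀' ∈ S_{Fix(σ)} and πᵢ, πᵢ' ∈ Cent₀(σᵢ). Then φ and ψ are conjugate if and only if μ₀ and μ₀' are conjugate in S_n and πᵢ and πᵢ' are conjugate in S_n for every 1 ≤ i ≤ l. -/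
open Equiv Equiv.Perm Finset

/-- The "non-trivial centralizer" `Cent₀(σ)`: permutations commuting with `σ`
whose support is contained in the support of `σ`. -/
def Cent0 {n : ℕ} (σ : Equiv.Perm (Fin n)) : Subgroup (Equiv.Perm (Fin n)) where
  carrier := {π | Commute π σ ∧ π.support ⊆ σ.support}
  one_mem' := ⟨Commute.one_left σ, by simp⟩
  mul_mem' := by
    intro a b ha hb
    exact ⟨ha.1.mul_left hb.1, (Equiv.Perm.support_mul_le a b).trans (sup_le ha.2 hb.2)⟩
  inv_mem' := by
    intro a ha
    exact ⟨ha.1.inv_left, by rw [Equiv.Perm.support_inv]; exact ha.2⟩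

/-- The product `∏_{i ∈ s} τᵢ^{zᵢ}` of powers of pairwise disjoint permutations. -/
def Kprod {n k : ℕ} (τ : Fin k → Equiv.Perm (Fin n))
    (hdisj : ∀ i j, i ≠ j → Equiv.Perm.Disjoint (τ i) (τ j))
    (s : Finset (Fin k)) (z : Fin k → ℤ) : Equiv.Perm (Fin n) :=
  s.noncommProd (fun i => τ i ^ z i)
    (fun a _ b _ hab => Commute.zpow_zpow ((hdisj a b hab).commute) _ _)

/-- The subgroup `H_σ = { x ∈ S_{X_σ} : xσx⁻¹ = σ^z for some integer z }`, as a set. -/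
def Hgrp {n : ℕ} (σ : Equiv.Perm (Fin n)) : Set (Equiv.Perm (Fin n)) :=
  {x | x.support ⊆ σ.support ∧ ∃ z : ℤ, x * σ * x⁻¹ = σ ^ z}

set_option linter.unusedSectionVars false


section Helpers
variable {α : Type*} [Fintype α] [DecidableEq α]

lemma list_prod_apply_fixed (l : List (Perm α)) (x : α) (h : ∀ g ∈ l, g x = x) :
    l.prod x = x := by
  induction l with
  | nil => simp
  | cons hd tl ih =>
    simp only [List.prod_cons, Equiv.Perm.mul_apply]
    rw [ih (fun g hg => h g (List.mem_cons_of_mem _ hg)), h hd List.mem_cons_self]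

lemma list_prod_apply_of_mem {l : List (Perm α)} (hl : l.Pairwise Equiv.Perm.Disjoint)
    {g : Perm α} (hg : g ∈ l) {x : α} (hx : x ∈ g.support) : l.prod x = g x := by
  induction l with
  | nil => simp at hg
  | cons hd tl ih =>
    rcases List.Pairwise.of_cons hl with htl
    have hhd : ∀ t ∈ tl, Equiv.Perm.Disjoint hd t := fun t ht => List.rel_of_pairwise_cons hl ht
    rcases List.mem_cons.mp hg with rfl | hg'
    · simp only [List.prod_cons, Equiv.Perm.mul_apply]
      rw [list_prod_apply_fixed tl x]
      intro t ht
      have := (hhd t ht) x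
      rcases this with h1 | h2
      · exact absurd h1 (Equiv.Perm.mem_support.mp hx)
      · exact h2
    · simp only [List.prod_cons, Equiv.Perm.mul_apply]
      rw [ih htl hg']
      have hgx : g x ∈ g.support := Equiv.Perm.apply_mem_support.mpr hx
      rcases (hhd g hg').symm (g x) with h1 | h2
      · exact absurd h1 (Equiv.Perm.mem_support.mp hgx)
      · exact h2

lemma list_prod_pow_apply_of_mem {l : List (Perm α)} (hl : l.Pairwise Equiv.Perm.Disjoint)
    {g : Perm α} (hg : g ∈ l) {x : α} (hx : x ∈ g.support) (t : ℕ) :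
    (l.prod ^ t) x = (g ^ t) x := by
  induction t with
  | zero => simp
  | succ t ih =>
    rw [pow_succ', pow_succ', Equiv.Perm.mul_apply, Equiv.Perm.mul_apply, ih,
      list_prod_apply_of_mem hl hg (Equiv.Perm.pow_apply_mem_support.mpr hx)]

lemma support_subset_prod {l : List (Perm α)} (hl : l.Pairwise Equiv.Perm.Disjoint)
    {g : Perm α} (hg : g ∈ l) : g.support ⊆ l.prod.support := by
  intro x hx
  rw [Equiv.Perm.mem_support, list_prod_apply_of_mem hl hg hx]
  exact Equiv.Perm.mem_support.mp hx

lemma orderOf_dvd_prod {l : List (Perm α)} (hl : l.Pairwise Equiv.Perm.Disjoint)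
    {g : Perm α} (hg : g ∈ l) : orderOf g ∣ orderOf l.prod := by
  apply orderOf_dvd_of_pow_eq_one
  ext x
  by_cases hx : x ∈ g.support
  · rw [← list_prod_pow_apply_of_mem hl hg hx, pow_orderOf_eq_one]
  · have : x ∉ (g ^ orderOf l.prod).support := fun h => hx (Equiv.Perm.support_pow_le _ _ h)
    rw [Equiv.Perm.notMem_support.mp this]; rfl

lemma cycleType_list_prod {l : List (Perm α)} (hl : l.Pairwise Equiv.Perm.Disjoint) :
    l.prod.cycleType = (l.map Equiv.Perm.cycleType).sum := by
  induction l with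
  | nil => simp
  | cons hd tl ih =>
    have hdisj : Equiv.Perm.Disjoint hd tl.prod :=
      Equiv.Perm.disjoint_prod_right tl (fun g hg => List.rel_of_pairwise_cons hl hg)
    simp only [List.prod_cons, List.map_cons, List.sum_cons]
    rw [hdisj.cycleType_mul, ih (List.Pairwise.of_cons hl)]

lemma ofFn_prod_mul {m : ℕ} (f g : Fin m → Perm α)
    (h : ∀ i j, i ≠ j → Commute (g i) (f j)) :
    (List.ofFn f).prod * (List.ofFn g).prod = (List.ofFn (fun i => f i * g i)).prod := by
  induction m with
  | zero => simp
  | succ m ih =>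
    simp only [List.ofFn_succ, List.prod_cons]
    set Pf := (List.ofFn fun i : Fin m => f i.succ).prod with hPf
    set Pg := (List.ofFn fun i : Fin m => g i.succ).prod with hPg
    have hcomm : Commute (g 0) Pf := by
      apply Commute.list_prod_right
      intro x hx
      rw [List.mem_ofFn] at hx
      obtain ⟨i, rfl⟩ := hx
      exact h 0 i.succ (Fin.succ_ne_zero i).symm
    rw [← ih _ _ (fun i j hij => h i.succ j.succ (fun hh => hij (Fin.succ_injective _ hh)))]
    rw [mul_assoc (f 0) Pf, ← mul_assoc Pf (g 0), ← hcomm.eq, mul_assoc (g 0),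
      ← mul_assoc (f 0) (g 0)]

end Helpers

section MP
variable {α : Type*} [Fintype α] [DecidableEq α]

lemma perm_pow_apply_eq_iff_dvd {f : Perm α} {x : α} (hx : f x ≠ x) (t : ℕ) :
    (f ^ t) x = x ↔ (f.cycleOf x).support.card ∣ t := by
  have hc : (f.cycleOf x).IsCycle := Equiv.Perm.isCycle_cycleOf f hx
  have hcx : (f.cycleOf x) x ≠ x := by rw [Equiv.Perm.cycleOf_apply_self]; exact hx
  rw [← Equiv.Perm.cycleOf_pow_apply_self f x t, ← hc.pow_eq_one_iff' hcx,
    ← hc.orderOf, orderOf_dvd_iff_pow_eq_one]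

lemma minimalPeriod_eq_card_support_cycleOf {f : Perm α} {x : α} (hx : f x ≠ x) :
    Function.minimalPeriod f x = (f.cycleOf x).support.card := by
  have h1 : Function.IsPeriodicPt f ((f.cycleOf x).support.card) x := by
    show f^[(f.cycleOf x).support.card] x = x
    rw [Equiv.Perm.iterate_eq_pow]
    exact (perm_pow_apply_eq_iff_dvd hx _).mpr dvd_rfl
  have hpos : 0 < (f.cycleOf x).support.card := by
    have := (Equiv.Perm.isCycle_cycleOf f hx).two_le_card_support
    omega
  apply Nat.dvd_antisymm
  · exact h1.minimalPeriod_dvd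
  · rw [← perm_pow_apply_eq_iff_dvd hx, ← Equiv.Perm.iterate_eq_pow]
    exact Function.isPeriodicPt_minimalPeriod f x

lemma minimalPeriod_perm_pos (f : Perm α) (x : α) : 0 < Function.minimalPeriod f x := by
  apply Function.IsPeriodicPt.minimalPeriod_pos (orderOf_pos f)
  show f^[orderOf f] x = x
  rw [Equiv.Perm.iterate_eq_pow, pow_orderOf_eq_one]
  rfl

lemma minimalPeriod_eq_one_iff {f : Perm α} {x : α} :
    Function.minimalPeriod f x = 1 ↔ f x = x := by
  exact Function.minimalPeriod_eq_one_iff_isFixedPt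

lemma mp_eq_of_replicate {c : Perm α} {k d : ℕ}
    (h : c.cycleType = Multiset.replicate k d) {x : α} (hx : c x ≠ x) :
    Function.minimalPeriod c x = d := by
  rw [minimalPeriod_eq_card_support_cycleOf hx]
  have hmem : (c.cycleOf x).support.card ∈ c.cycleType := by
    rw [Equiv.Perm.cycleType_def]
    exact Multiset.mem_map_of_mem _
      (Equiv.Perm.cycleOf_mem_cycleFactorsFinset_iff.mpr (Equiv.Perm.mem_support.mpr hx))
  rw [h] at hmem
  exact Multiset.eq_of_mem_replicate hmem

/-- the number of points with given (nontrivial) minimal period `t`. -/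
lemma card_minimalPeriod_eq (g : Perm α) (t : ℕ) :
    (univ.filter (fun x => g x ≠ x ∧ Function.minimalPeriod g x = t)).card
      = t * g.cycleType.count t := by
  classical
  have hmap : ∀ x ∈ univ.filter (fun x => g x ≠ x ∧ Function.minimalPeriod g x = t),
      g.cycleOf x ∈ g.cycleFactorsFinset.filter (fun f => f.support.card = t) := by
    intro x hx
    rw [Finset.mem_filter] at hx ⊢
    obtain ⟨-, hx1, hx2⟩ := hx
    refine ⟨Equiv.Perm.cycleOf_mem_cycleFactorsFinset_iff.mpr (Equiv.Perm.mem_support.mpr hx1), ?_⟩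
    rw [← minimalPeriod_eq_card_support_cycleOf hx1, hx2]
  rw [Finset.card_eq_sum_card_fiberwise hmap]
  have hfib : ∀ f ∈ g.cycleFactorsFinset.filter (fun f => f.support.card = t),
      ((univ.filter (fun x => g x ≠ x ∧ Function.minimalPeriod g x = t)).filter
        (fun x => g.cycleOf x = f)).card = t := by
    intro f hf
    rw [Finset.mem_filter] at hf
    obtain ⟨hf1, hf2⟩ := hf
    have : ((univ.filter (fun x => g x ≠ x ∧ Function.minimalPeriod g x = t)).filter
        (fun x => g.cycleOf x = f)) = f.support := by
      ext x
      simp only [Finset.mem_filter, Finset.mem_univ, true_and]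
      constructor
      · rintro ⟨⟨hx1, -⟩, rfl⟩
        rw [Equiv.Perm.mem_support_cycleOf_iff]
        exact ⟨Equiv.Perm.SameCycle.refl _ _, Equiv.Perm.mem_support.mpr hx1⟩
      · intro hxf
        have hcf : f = g.cycleOf x := Equiv.Perm.cycle_is_cycleOf hxf hf1
        have hx1 : g x ≠ x := by
          have := Equiv.Perm.mem_cycleFactorsFinset_support_le hf1 hxf
          exact Equiv.Perm.mem_support.mp this
        refine ⟨⟨hx1, ?_⟩, hcf.symm⟩
        rw [minimalPeriod_eq_card_support_cycleOf hx1, ← hcf, hf2]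
    rw [this, hf2]
  rw [Finset.sum_congr rfl hfib, Finset.sum_const, smul_eq_mul, mul_comm]
  congr 1
  rw [Equiv.Perm.cycleType_def, Multiset.count_map]
  have hh : (filter (fun f => f.support.card = t) g.cycleFactorsFinset).card
      = Multiset.card (Multiset.filter (fun f => f.support.card = t) g.cycleFactorsFinset.val) := by
    rw [← Finset.filter_val]
    rfl
  rw [hh]
  congr 1
  exact Multiset.filter_congr (fun x _ => ⟨fun h => h.symm, fun h => h.symm⟩)

end MP

lemma nat_arith {L Tc Tp A B : ℕ} (hl : L ∣ Tc * Tp)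
    (hco : Nat.Coprime Tc Tp)
    (hA : Nat.Coprime A Tc) (hAp : Tp ∣ A)
    (hB : Nat.Coprime B Tp) (hBc : Tc ∣ B) :
    L / Nat.gcd L A * (L / Nat.gcd L B) = L := by
  set a := Nat.gcd L Tc with ha
  set b := Nat.gcd L Tp with hb
  have hab : a * b = L := (Nat.gcd_mul_gcd_eq_iff_dvd_mul_of_coprime hco).mpr hl
  have hgA : Nat.gcd L A = b := by
    apply Nat.dvd_antisymm
    · have h1 : Nat.Coprime (Nat.gcd L A) a :=
        Nat.Coprime.coprime_dvd_left (Nat.gcd_dvd_right L A)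
          (Nat.Coprime.coprime_dvd_right (Nat.gcd_dvd_right L Tc) hA)
      have h2 : Nat.gcd L A ∣ a * b := hab ▸ Nat.gcd_dvd_left L A
      exact Nat.Coprime.dvd_of_dvd_mul_left h1 h2
    · exact Nat.dvd_gcd (Nat.gcd_dvd_left L Tp) ((Nat.gcd_dvd_right L Tp).trans hAp)
  have hgB : Nat.gcd L B = a := by
    apply Nat.dvd_antisymm
    · have h1 : Nat.Coprime (Nat.gcd L B) b :=
        Nat.Coprime.coprime_dvd_left (Nat.gcd_dvd_right L B)
          (Nat.Coprime.coprime_dvd_right (Nat.gcd_dvd_right L Tp) hB)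
      have h2 : Nat.gcd L B ∣ b * a := by rw [mul_comm]; exact hab ▸ Nat.gcd_dvd_left L B
      exact Nat.Coprime.dvd_of_dvd_mul_left h1 h2
    · exact Nat.dvd_gcd (Nat.gcd_dvd_left L Tc) ((Nat.gcd_dvd_right L Tc).trans hBc)
  rcases Nat.eq_zero_or_pos a with h0 | ha0
  · have hL : L = 0 := by rw [← hab, h0, zero_mul]
    simp [hL]
  rcases Nat.eq_zero_or_pos b with h0 | hb0
  · have hL : L = 0 := by rw [← hab, h0, mul_zero]
    simp [hL]
  rw [hgA, hgB, ← hab, Nat.mul_div_cancel_left _ (by omega : 0 < a),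
    Nat.mul_div_cancel _ (by omega : 0 < b)]

section PW
variable {α : Type*} [Fintype α] [DecidableEq α]

lemma perm_mem_periodicPts (u : Perm α) (x : α) : x ∈ Function.periodicPts ⇑u := by
  refine ⟨orderOf u, orderOf_pos u, ?_⟩
  show (⇑u)^[orderOf u] x = x
  rw [Equiv.Perm.iterate_eq_pow, pow_orderOf_eq_one]
  rfl

lemma minimalPeriod_mul_of_coprime {c p : Perm α}
    (h : Commute c p) (hco : Nat.Coprime (orderOf c) (orderOf p)) (x : α) :
    Function.minimalPeriod ⇑(c * p) x
      = Function.minimalPeriod ⇑c x * Function.minimalPeriod ⇑p x := by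
  set u := c * p with hu
  obtain ⟨A, hA1, hA2⟩ := Nat.chineseRemainder hco 1 0
  obtain ⟨B, hB1, hB2⟩ := Nat.chineseRemainder hco 0 1
  have huA : u ^ A = c := by
    rw [hu, h.mul_pow, pow_eq_pow_iff_modEq.mpr hA1, pow_eq_pow_iff_modEq.mpr hA2,
      pow_one, pow_zero, mul_one]
  have huB : u ^ B = p := by
    rw [hu, h.mul_pow, pow_eq_pow_iff_modEq.mpr hB1, pow_eq_pow_iff_modEq.mpr hB2,
      pow_zero, pow_one, one_mul]
  have hper : x ∈ Function.periodicPts ⇑u := perm_mem_periodicPts u x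
  have hmpc : Function.minimalPeriod ⇑c x
      = Function.minimalPeriod ⇑u x / Nat.gcd (Function.minimalPeriod ⇑u x) A := by
    rw [← huA, ← Equiv.Perm.iterate_eq_pow]
    exact Function.minimalPeriod_iterate_eq_div_gcd' hper
  have hmpp : Function.minimalPeriod ⇑p x
      = Function.minimalPeriod ⇑u x / Nat.gcd (Function.minimalPeriod ⇑u x) B := by
    rw [← huB, ← Equiv.Perm.iterate_eq_pow]
    exact Function.minimalPeriod_iterate_eq_div_gcd' hper
  have hLdvd : Function.minimalPeriod ⇑u x ∣ orderOf c * orderOf p := by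
    have h1 : Function.minimalPeriod ⇑u x ∣ orderOf u := by
      apply Function.IsPeriodicPt.minimalPeriod_dvd
      show (⇑u)^[orderOf u] x = x
      rw [Equiv.Perm.iterate_eq_pow, pow_orderOf_eq_one]; rfl
    refine h1.trans (h.orderOf_mul_dvd_lcm.trans ?_)
    rw [Nat.Coprime.lcm_eq_mul hco]
  have hA' : Nat.Coprime A (orderOf c) := by
    have hm : A % orderOf c = 1 % orderOf c := hA1
    unfold Nat.Coprime
    rw [Nat.gcd_comm, Nat.gcd_rec, hm, ← Nat.gcd_rec, Nat.gcd_one_right]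
  have hB' : Nat.Coprime B (orderOf p) := by
    have hm : B % orderOf p = 1 % orderOf p := hB2
    unfold Nat.Coprime
    rw [Nat.gcd_comm, Nat.gcd_rec, hm, ← Nat.gcd_rec, Nat.gcd_one_right]
  have hAp : orderOf p ∣ A := (Nat.modEq_zero_iff_dvd).mp hA2
  have hBc : orderOf c ∣ B := (Nat.modEq_zero_iff_dvd).mp hB1
  rw [hmpc, hmpp]
  exact (nat_arith hLdvd hco hA' hAp hB' hBc).symm

end PW

section Dev4
variable {α : Type*} [Fintype α] [DecidableEq α]

lemma key_identity {c p : Perm α} {k d : ℕ} (hd2 : 2 ≤ d)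
    (hcom : Commute c p) (hsupp : p.support ⊆ c.support)
    (hco : Nat.Coprime (orderOf c) (orderOf p))
    (hct : c.cycleType = Multiset.replicate k d) :
    d • (c * p).cycleType
      = (p.cycleType.map (fun m => d * m))
        + Multiset.replicate (d * k - p.cycleType.sum) d := by
  have hd0 : 0 < d := by omega
  have hcard : c.support.card = k * d := by
    rw [← Equiv.Perm.sum_cycleType, hct, Multiset.sum_replicate, smul_eq_mul]
  have hS : p.cycleType.sum = p.support.card := Equiv.Perm.sum_cycleType p
  have F2 : ∀ x : α, c x = x → p x = x ∧ (c * p) x = x := by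
    intro x hx
    have hxp : p x = x := by
      have : x ∉ p.support := fun hh => (Equiv.Perm.mem_support.mp (hsupp hh)) hx
      exact Equiv.Perm.notMem_support.mp this
    exact ⟨hxp, by rw [Equiv.Perm.mul_apply, hxp, hx]⟩
  have F1 : ∀ x : α, c x ≠ x →
      Function.minimalPeriod ⇑(c * p) x = d * Function.minimalPeriod ⇑p x := by
    intro x hx
    rw [minimalPeriod_mul_of_coprime hcom hco x, mp_eq_of_replicate hct hx]
  rw [Multiset.ext]
  intro t
  rw [Multiset.count_nsmul, Multiset.count_add, Multiset.count_replicate]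
  by_cases ht2 : 2 ≤ t
  swap
  · have h1 : Multiset.count t (c * p).cycleType = 0 :=
      Multiset.count_eq_zero_of_notMem
        (fun hmem => ht2 (Equiv.Perm.two_le_of_mem_cycleType hmem))
    have h2 : Multiset.count t (p.cycleType.map (fun m => d * m)) = 0 := by
      apply Multiset.count_eq_zero_of_notMem
      intro hmem
      obtain ⟨m, hm, rfl⟩ := Multiset.mem_map.mp hmem
      have := Equiv.Perm.two_le_of_mem_cycleType hm
      nlinarith
    rw [h1, h2, if_neg (by omega : ¬ d = t), mul_zero, add_zero]
  · -- t ≥ 2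
    have ht0 : 0 < t := by omega
    apply Nat.eq_of_mul_eq_mul_left ht0
    have hAcard : t * Multiset.count t (c * p).cycleType
        = (univ.filter (fun x => (c * p) x ≠ x ∧ Function.minimalPeriod ⇑(c * p) x = t)).card :=
      (card_minimalPeriod_eq _ t).symm
    by_cases hdvd : d ∣ t
    · obtain ⟨m, rfl⟩ := hdvd
      have hm0 : 0 < m := by nlinarith
      by_cases hm1 : m = 1
      · subst hm1
        rw [mul_one] at *
        -- t = d
        have hAset : (univ.filter (fun x => (c * p) x ≠ x ∧
            Function.minimalPeriod ⇑(c * p) x = d)) = c.support \ p.support := by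
          ext x
          simp only [Finset.mem_filter, Finset.mem_univ, true_and, Finset.mem_sdiff,
            Equiv.Perm.mem_support, not_not]
          constructor
          · rintro ⟨h1, h2⟩
            have hcx : c x ≠ x := fun hc => h1 (F2 x hc).2
            have hpm : d * Function.minimalPeriod ⇑p x = d := by rw [← F1 x hcx, h2]
            have : Function.minimalPeriod ⇑p x = 1 := by
              have := Nat.eq_of_mul_eq_mul_left hd0 (hpm.trans (mul_one d).symm)
              omega
            exact ⟨hcx, minimalPeriod_eq_one_iff.mp this⟩
          · rintro ⟨h1, h2⟩
            have hmp : Function.minimalPeriod ⇑(c * p) x = d := by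
              rw [F1 x h1, minimalPeriod_eq_one_iff.mpr h2, mul_one]
            refine ⟨fun hfix => ?_, hmp⟩
            rw [minimalPeriod_eq_one_iff.mpr hfix] at hmp
            omega
        have hcount_map : Multiset.count d (p.cycleType.map (fun m => d * m)) = 0 := by
          apply Multiset.count_eq_zero_of_notMem
          intro hmem
          obtain ⟨m', hm', heq⟩ := Multiset.mem_map.mp hmem
          have := Equiv.Perm.two_le_of_mem_cycleType hm'
          nlinarith
        rw [hcount_map, if_pos rfl, zero_add, hAcard, hAset,
          Finset.card_sdiff_of_subset hsupp, hcard, hS, mul_comm k d]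
      · -- m ≥ 2
        have hm2 : 2 ≤ m := by omega
        have hAset : (univ.filter (fun x => (c * p) x ≠ x ∧
            Function.minimalPeriod ⇑(c * p) x = d * m))
            = (univ.filter (fun x => p x ≠ x ∧ Function.minimalPeriod ⇑p x = m)) := by
          ext x
          simp only [Finset.mem_filter, Finset.mem_univ, true_and]
          constructor
          · rintro ⟨h1, h2⟩
            have hcx : c x ≠ x := fun hc => h1 (F2 x hc).2
            rw [F1 x hcx] at h2
            have hmp : Function.minimalPeriod ⇑p x = m := Nat.eq_of_mul_eq_mul_left hd0 h2
            refine ⟨fun hfix => ?_, hmp⟩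
            rw [minimalPeriod_eq_one_iff.mpr hfix] at hmp
            omega
          · rintro ⟨h1, h2⟩
            have hcx : c x ≠ x := by
              have := hsupp (Equiv.Perm.mem_support.mpr h1)
              exact Equiv.Perm.mem_support.mp this
            have hmp : Function.minimalPeriod ⇑(c * p) x = d * m := by rw [F1 x hcx, h2]
            refine ⟨fun hfix => ?_, hmp⟩
            rw [minimalPeriod_eq_one_iff.mpr hfix] at hmp
            nlinarith
        have hBcard : m * Multiset.count m p.cycleType
            = (univ.filter (fun x => p x ≠ x ∧ Function.minimalPeriod ⇑p x = m)).card :=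
          (card_minimalPeriod_eq _ m).symm
        have hcount_map : Multiset.count (d * m) (p.cycleType.map (fun m => d * m))
            = Multiset.count m p.cycleType :=
          Multiset.count_map_eq_count' _ _ (fun x y hxy => Nat.eq_of_mul_eq_mul_left hd0 hxy) m
        rw [hcount_map, if_neg (by intro h; nlinarith : ¬ d = d * m), add_zero]
        have := hAcard.trans (congrArg Finset.card hAset)
        calc d * m * (d * Multiset.count (d*m) (c*p).cycleType)
            = d * (d * m * Multiset.count (d*m) (c*p).cycleType) := by ring
          _ = d * (m * Multiset.count m p.cycleType) := by rw [this, ← hBcard]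
          _ = d * m * Multiset.count m p.cycleType := by ring
    · -- ¬ d ∣ t
      have hAset : (univ.filter (fun x => (c * p) x ≠ x ∧
          Function.minimalPeriod ⇑(c * p) x = t)) = ∅ := by
        rw [Finset.eq_empty_iff_forall_notMem]
        intro x hx
        rw [Finset.mem_filter] at hx
        obtain ⟨-, h1, h2⟩ := hx
        have hcx : c x ≠ x := fun hc => h1 (F2 x hc).2
        rw [F1 x hcx] at h2
        exact hdvd ⟨_, h2.symm⟩
      have h0 : Multiset.count t (c * p).cycleType = 0 := by
        have h' := hAcard
        rw [hAset, Finset.card_empty] at h'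
        rcases Nat.mul_eq_zero.mp h' with h | h
        · omega
        · exact h
      have h2 : Multiset.count t (p.cycleType.map (fun m => d * m)) = 0 := by
        apply Multiset.count_eq_zero_of_notMem
        intro hmem
        obtain ⟨m', hm', heq⟩ := Multiset.mem_map.mp hmem
        exact hdvd ⟨m', heq.symm⟩
      rw [h0, h2, if_neg (by intro hdt; exact hdvd ⟨1, by omega⟩ : ¬ d = t)]
      simp

end Dev4
section Extra
variable {α : Type*} [Fintype α] [DecidableEq α]

lemma disjoint_mono {a b c e : Perm α} (h : Equiv.Perm.Disjoint a b)
    (hc : c.support ⊆ a.support) (he : e.support ⊆ b.support) :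
    Equiv.Perm.Disjoint c e := by
  intro x
  rcases h x with h1 | h1
  · left
    have : x ∉ a.support := by rw [Equiv.Perm.mem_support]; exact fun hh => hh h1
    exact Equiv.Perm.notMem_support.mp (fun hh => this (hc hh))
  · right
    have : x ∉ b.support := by rw [Equiv.Perm.mem_support]; exact fun hh => hh h1
    exact Equiv.Perm.notMem_support.mp (fun hh => this (he hh))

lemma nsmul_cancel {d : ℕ} (hd : d ≠ 0) {s t : Multiset ℕ} (h : d • s = d • t) : s = t := by
  rw [Multiset.ext] at h ⊢
  intro x
  have := h x
  rw [Multiset.count_nsmul, Multiset.count_nsmul] at this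
  exact Nat.eq_of_mul_eq_mul_left (Nat.pos_of_ne_zero hd) this

lemma filter_finset_sum {β : Type*} (p : ℕ → Prop) [DecidablePred p] (s : Finset β)
    (f : β → Multiset ℕ) :
    (∑ i ∈ s, f i).filter p = ∑ i ∈ s, (f i).filter p := by
  classical
  induction s using Finset.induction with
  | empty => simp
  | insert _ _ h ih => rw [Finset.sum_insert h, Finset.sum_insert h, Multiset.filter_add, ih]

lemma label_eq {L N dd m : ℕ} (hdN : dd ∣ N) (hL : L = dd * m) (hm : Nat.Coprime m N)
    (hL0 : 0 < L) : Nat.gcd L (N ^ L) = dd := by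
  have hdvd : dd ∣ N ^ L := hdN.trans (dvd_pow_self N (by omega))
  have hmE : Nat.Coprime m (N ^ L) := Nat.Coprime.pow_right L hm
  revert hdvd hmE
  generalize N ^ L = E
  intro hdvd hmE
  rw [hL, mul_comm dd m, Nat.Coprime.gcd_mul_left_cancel dd hmE, Nat.gcd_eq_left hdvd]

lemma cycleType_mul_eq_iff {c p p' : Perm α} {k d : ℕ} (hd2 : 2 ≤ d)
    (hcom : Commute c p) (hsupp : p.support ⊆ c.support)
    (hco : Nat.Coprime (orderOf c) (orderOf p))
    (hcom' : Commute c p') (hsupp' : p'.support ⊆ c.support)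
    (hco' : Nat.Coprime (orderOf c) (orderOf p'))
    (hct : c.cycleType = Multiset.replicate k d) :
    (c * p).cycleType = (c * p').cycleType ↔ p.cycleType = p'.cycleType := by
  have hid := key_identity hd2 hcom hsupp hco hct
  have hid' := key_identity hd2 hcom' hsupp' hco' hct
  have hfilt : ∀ q : Perm α,
      (d • (c * q).cycleType
        = (q.cycleType.map (fun m => d * m))
          + Multiset.replicate (d * k - q.cycleType.sum) d) →
      q.cycleType.map (fun m => d * m)
        = (d • (c * q).cycleType).filter (fun x => ¬ x = d) := by
    intro q hq
    rw [hq, Multiset.filter_add, Multiset.filter_eq_self.mpr ?_, Multiset.filter_eq_nil.mpr ?_,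
      add_zero]
    · intro L hL
      exact not_not_intro (Multiset.eq_of_mem_replicate hL)
    · intro L hL
      obtain ⟨m, hm, rfl⟩ := Multiset.mem_map.mp hL
      have := Equiv.Perm.two_le_of_mem_cycleType hm
      intro hEq
      nlinarith
  constructor
  · intro h
    have hmap : p.cycleType.map (fun m => d * m) = p'.cycleType.map (fun m => d * m) := by
      rw [hfilt p hid, hfilt p' hid', h]
    exact Multiset.map_injective
      (fun x y hxy => Nat.eq_of_mul_eq_mul_left (by omega) hxy) hmap
  · intro h
    apply nsmul_cancel (show d ≠ 0 by omega)
    rw [hid, hid', h]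

lemma mem_cycleType_mul {c p : Perm α} {k d : ℕ} (hd2 : 2 ≤ d)
    (hcom : Commute c p) (hsupp : p.support ⊆ c.support)
    (hco : Nat.Coprime (orderOf c) (orderOf p))
    (hct : c.cycleType = Multiset.replicate k d) :
    ∀ L ∈ (c * p).cycleType, ∃ m, L = d * m ∧ (m = 1 ∨ m ∈ p.cycleType) := by
  intro L hL
  have hid := key_identity hd2 hcom hsupp hco hct
  have hmem : L ∈ d • (c * p).cycleType := Multiset.mem_nsmul.mpr ⟨by omega, hL⟩
  rw [hid, Multiset.mem_add] at hmem
  rcases hmem with hmem | hmem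
  · obtain ⟨m, hm, rfl⟩ := Multiset.mem_map.mp hmem
    exact ⟨m, rfl, Or.inr hm⟩
  · exact ⟨1, by rw [Multiset.eq_of_mem_replicate hmem, mul_one], Or.inl rfl⟩

end Extra

/-- `A` is an abelian group generated by `a, b` of coprime orders,
`φ, ψ : A → S_n` satisfy `φ(a) = ψ(a) = σ = σ₁⋯σ_l` (each `σᵢ` a product of `kᵢ`
pairwise disjoint `dᵢ`-cycles, the `dᵢ` pairwise distinct), and
`φ(b) = μ₀π₁⋯π_l`, `ψ(b) = μ₀'π₁'⋯π_l'` with `μ₀, μ₀' ∈ S_{Fix(σ)}` and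
`πᵢ, πᵢ' ∈ Cent₀(σᵢ)`.  Then `φ` and `ψ` are conjugate iff `μ₀, μ₀'` are conjugate
in `S_n` and `πᵢ, πᵢ'` are conjugate in `S_n` for every `i`. -/
theorem abelian_homomorphism_conjugacy_of_coprime_orders
    {A : Type*} [CommGroup A] (a b : A)
    (hgen : Subgroup.closure ({a, b} : Set A) = ⊤)
    (hcop : Nat.Coprime (orderOf a) (orderOf b))
    {n l : ℕ} (φ ψ : A →* Equiv.Perm (Fin n))
    (σ : Equiv.Perm (Fin n)) (σs : Fin l → Equiv.Perm (Fin n))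
    (k d : Fin l → ℕ) (hd : Function.Injective d)
    (hcycles : ∀ i, ∃ τ : Fin (k i) → Equiv.Perm (Fin n),
      (∀ j, (τ j).IsCycle) ∧ (∀ j, (τ j).support.card = d i) ∧
      (∀ j j', j ≠ j' → Equiv.Perm.Disjoint (τ j) (τ j')) ∧
      σs i = (List.ofFn τ).prod)
    (hdisjσ : ∀ i i', i ≠ i' → Equiv.Perm.Disjoint (σs i) (σs i'))
    (hσ : σ = (List.ofFn σs).prod)
    (ha : φ a = σ) (ha' : ψ a = σ)
    (μ₀ μ₀' : Equiv.Perm (Fin n)) (π π' : Fin l → Equiv.Perm (Fin n))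
    (hμ₀ : μ₀.support ⊆ σ.supportᶜ) (hμ₀' : μ₀'.support ⊆ σ.supportᶜ)
    (hπmem : ∀ i, π i ∈ Cent0 (σs i)) (hπ'mem : ∀ i, π' i ∈ Cent0 (σs i))
    (hφb : φ b = μ₀ * (List.ofFn π).prod)
    (hψb : ψ b = μ₀' * (List.ofFn π').prod) :
    (∃ ρ : Equiv.Perm (Fin n), ∀ g : A, ρ * φ g * ρ⁻¹ = ψ g) ↔
      (IsConj μ₀ μ₀' ∧ ∀ i, IsConj (π i) (π' i)) := by
  classical
  -- A is generated by a * b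
  have hgenab : ∀ g : A, g ∈ Subgroup.closure ({a * b} : Set A) := by
    have hsub : Subgroup.closure ({a, b} : Set A) ≤ Subgroup.closure ({a * b} : Set A) := by
      rw [Subgroup.closure_le]
      intro x hx
      simp only [Set.mem_insert_iff, Set.mem_singleton_iff] at hx
      rcases hx with rfl | rfl
      · obtain ⟨e, he1, he2⟩ := Nat.chineseRemainder hcop 1 0
        have hpow : (x * b) ^ e = x := by
          rw [mul_pow, pow_eq_pow_iff_modEq.mpr he1, pow_eq_pow_iff_modEq.mpr he2,
            pow_one, pow_zero, mul_one]
        have hmem := Subgroup.pow_mem _ (Subgroup.subset_closure (Set.mem_singleton (x * b))) e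
        rw [hpow] at hmem
        exact hmem
      · obtain ⟨e, he1, he2⟩ := Nat.chineseRemainder hcop 0 1
        have hpow : (a * x) ^ e = x := by
          rw [mul_pow, pow_eq_pow_iff_modEq.mpr he1, pow_eq_pow_iff_modEq.mpr he2,
            pow_zero, pow_one, one_mul]
        have hmem := Subgroup.pow_mem _ (Subgroup.subset_closure (Set.mem_singleton (a * x))) e
        rw [hpow] at hmem
        exact hmem
    intro g
    apply hsub
    rw [hgen]
    trivial
  -- conjugacy of the homomorphisms is conjugacy of the images of a*b
  have hE1 : (∃ ρ : Equiv.Perm (Fin n), ∀ g : A, ρ * φ g * ρ⁻¹ = ψ g)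
      ↔ IsConj (φ (a * b)) (ψ (a * b)) := by
    constructor
    · rintro ⟨ρ, hρ⟩
      exact isConj_iff.mpr ⟨ρ, hρ (a * b)⟩
    · intro h
      obtain ⟨ρ, hρ⟩ := isConj_iff.mp h
      refine ⟨ρ, fun g => ?_⟩
      have hle : Subgroup.closure ({a * b} : Set A)
          ≤ MonoidHom.eqLocus ((MulAut.conj ρ).toMonoidHom.comp φ) ψ := by
        rw [Subgroup.closure_le]
        intro x hx
        rw [Set.mem_singleton_iff] at hx
        subst hx
        show ((MulAut.conj ρ).toMonoidHom.comp φ) (a * b) = ψ (a * b)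
        simpa [MonoidHom.comp_apply, MulAut.conj_apply, mul_assoc] using hρ
      have hloc : ((MulAut.conj ρ).toMonoidHom.comp φ) g = ψ g := hle (hgenab g)
      simpa [MonoidHom.comp_apply, MulAut.conj_apply, mul_assoc] using hloc
  -- basic data
  have hcommπ : ∀ i, Commute (σs i) (π i) := fun i => ((hπmem i).1).symm
  have hcommπ' : ∀ i, Commute (σs i) (π' i) := fun i => ((hπ'mem i).1).symm
  have hsubπ : ∀ i, (π i).support ⊆ (σs i).support := fun i => (hπmem i).2
  have hsubπ' : ∀ i, (π' i).support ⊆ (σs i).support := fun i => (hπ'mem i).2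
  have hCTσ : ∀ i, (σs i).cycleType = Multiset.replicate (k i) (d i) := by
    intro i
    obtain ⟨τ, hτc, hτcard, hτdisj, hτprod⟩ := hcycles i
    have hpw : (List.ofFn τ).Pairwise Equiv.Perm.Disjoint := by
      rw [List.pairwise_ofFn]
      intro j j' hjj'
      exact hτdisj j j' (ne_of_lt hjj')
    have hCT := Equiv.Perm.cycleType_eq (List.ofFn τ) hτprod.symm
      (fun g hg => by obtain ⟨j, rfl⟩ := List.mem_ofFn.mp hg; exact hτc j) hpw
    rw [hCT, List.map_ofFn]
    have hconst : (Finset.card ∘ Equiv.Perm.support) ∘ τ = fun _ => d i := by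
      funext j
      exact hτcard j
    rw [hconst, List.ofFn_const]
    exact Multiset.coe_replicate _ _
  have hd2 : ∀ i, k i ≠ 0 → 2 ≤ d i := by
    intro i hk
    obtain ⟨τ, hτc, hτcard, -, -⟩ := hcycles i
    have hcard := hτcard ⟨0, Nat.pos_of_ne_zero hk⟩
    rw [← hcard]
    exact (hτc _).two_le_card_support
  have hk0σ : ∀ i, k i = 0 → σs i = 1 := by
    intro i hk
    have hh := hCTσ i
    rw [hk, Multiset.replicate_zero] at hh
    exact Equiv.Perm.cycleType_eq_zero.mp hh
  have hk0π : ∀ i, k i = 0 → π i = 1 := by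
    intro i hk
    have h1 := hsubπ i
    rw [hk0σ i hk, Equiv.Perm.support_one] at h1
    exact Equiv.Perm.support_eq_empty_iff.mp (Finset.subset_empty.mp h1)
  have hk0π' : ∀ i, k i = 0 → π' i = 1 := by
    intro i hk
    have h1 := hsubπ' i
    rw [hk0σ i hk, Equiv.Perm.support_one] at h1
    exact Equiv.Perm.support_eq_empty_iff.mp (Finset.subset_empty.mp h1)
  have hpwσ : (List.ofFn σs).Pairwise Equiv.Perm.Disjoint := by
    rw [List.pairwise_ofFn]
    intro i j hij
    exact hdisjσ i j (ne_of_lt hij)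
  have hmemσ : ∀ i, σs i ∈ List.ofFn σs := fun i => List.mem_ofFn.mpr ⟨i, rfl⟩
  have hsubσ : ∀ i, (σs i).support ⊆ σ.support := by
    intro i
    rw [hσ]
    exact support_subset_prod hpwσ (hmemσ i)
  have hordσi : ∀ i, orderOf (σs i) ∣ orderOf σ := by
    intro i
    rw [hσ]
    exact orderOf_dvd_prod hpwσ (hmemσ i)
  have hdisjσμ : Equiv.Perm.Disjoint σ μ₀ := by
    intro x
    by_cases hx : x ∈ μ₀.support
    · left
      exact Equiv.Perm.notMem_support.mp (Finset.mem_compl.mp (hμ₀ hx))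
    · right
      exact Equiv.Perm.notMem_support.mp hx
  have hdisjσμ' : Equiv.Perm.Disjoint σ μ₀' := by
    intro x
    by_cases hx : x ∈ μ₀'.support
    · left
      exact Equiv.Perm.notMem_support.mp (Finset.mem_compl.mp (hμ₀' hx))
    · right
      exact Equiv.Perm.notMem_support.mp hx
  have hdisjππ : ∀ i j, i ≠ j → Equiv.Perm.Disjoint (π i) (π j) :=
    fun i j hij => disjoint_mono (hdisjσ i j hij) (hsubπ i) (hsubπ j)
  have hdisjππ' : ∀ i j, i ≠ j → Equiv.Perm.Disjoint (π' i) (π' j) :=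
    fun i j hij => disjoint_mono (hdisjσ i j hij) (hsubπ' i) (hsubπ' j)
  have hdisjμπ : ∀ i, Equiv.Perm.Disjoint μ₀ (π i) :=
    fun i => disjoint_mono hdisjσμ.symm subset_rfl ((hsubπ i).trans (hsubσ i))
  have hdisjμπ' : ∀ i, Equiv.Perm.Disjoint μ₀' (π' i) :=
    fun i => disjoint_mono hdisjσμ'.symm subset_rfl ((hsubπ' i).trans (hsubσ i))
  have hpwLb : (μ₀ :: List.ofFn π).Pairwise Equiv.Perm.Disjoint := by
    rw [List.pairwise_cons]
    constructor
    · intro g hg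
      obtain ⟨i, rfl⟩ := List.mem_ofFn.mp hg
      exact hdisjμπ i
    · rw [List.pairwise_ofFn]
      intro i j hij
      exact hdisjππ i j (ne_of_lt hij)
  have hpwLb' : (μ₀' :: List.ofFn π').Pairwise Equiv.Perm.Disjoint := by
    rw [List.pairwise_cons]
    constructor
    · intro g hg
      obtain ⟨i, rfl⟩ := List.mem_ofFn.mp hg
      exact hdisjμπ' i
    · rw [List.pairwise_ofFn]
      intro i j hij
      exact hdisjππ' i j (ne_of_lt hij)
  have hφbprod : φ b = (μ₀ :: List.ofFn π).prod := by rw [hφb, List.prod_cons]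
  have hψbprod : ψ b = (μ₀' :: List.ofFn π').prod := by rw [hψb, List.prod_cons]
  have hordμ : orderOf μ₀ ∣ orderOf (φ b) := by
    rw [hφbprod]
    exact orderOf_dvd_prod hpwLb List.mem_cons_self
  have hordμ' : orderOf μ₀' ∣ orderOf (ψ b) := by
    rw [hψbprod]
    exact orderOf_dvd_prod hpwLb' List.mem_cons_self
  have hordπi : ∀ i, orderOf (π i) ∣ orderOf (φ b) := by
    intro i
    rw [hφbprod]
    exact orderOf_dvd_prod hpwLb (List.mem_cons_of_mem _ (List.mem_ofFn.mpr ⟨i, rfl⟩))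
  have hordπi' : ∀ i, orderOf (π' i) ∣ orderOf (ψ b) := by
    intro i
    rw [hψbprod]
    exact orderOf_dvd_prod hpwLb' (List.mem_cons_of_mem _ (List.mem_ofFn.mpr ⟨i, rfl⟩))
  have hcopφ : Nat.Coprime (orderOf (φ b)) (orderOf σ) := by
    have h1 : orderOf (φ b) ∣ orderOf b := orderOf_map_dvd φ b
    have h2 : orderOf σ ∣ orderOf a := by rw [← ha]; exact orderOf_map_dvd φ a
    exact Nat.Coprime.coprime_dvd_left h1 (Nat.Coprime.coprime_dvd_right h2 hcop.symm)
  have hcopψ : Nat.Coprime (orderOf (ψ b)) (orderOf σ) := by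
    have h1 : orderOf (ψ b) ∣ orderOf b := orderOf_map_dvd ψ b
    have h2 : orderOf σ ∣ orderOf a := by rw [← ha']; exact orderOf_map_dvd ψ a
    exact Nat.Coprime.coprime_dvd_left h1 (Nat.Coprime.coprime_dvd_right h2 hcop.symm)
  -- decomposition of the images of a*b
  have hcommπσ : ∀ i j, i ≠ j → Commute (π i) (σs j) := fun i j hij =>
    (disjoint_mono (hdisjσ i j hij) (hsubπ i) subset_rfl).commute
  have hcommπσ' : ∀ i j, i ≠ j → Commute (π' i) (σs j) := fun i j hij =>
    (disjoint_mono (hdisjσ i j hij) (hsubπ' i) subset_rfl).commute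
  have hdecompφ : φ (a * b) = (μ₀ :: List.ofFn (fun i => σs i * π i)).prod := by
    rw [map_mul, ha, hφb, List.prod_cons]
    rw [← ofFn_prod_mul σs π hcommπσ, ← hσ]
    rw [← mul_assoc, ← mul_assoc, hdisjσμ.commute.eq]
  have hdecompψ : ψ (a * b) = (μ₀' :: List.ofFn (fun i => σs i * π' i)).prod := by
    rw [map_mul, ha', hψb, List.prod_cons]
    rw [← ofFn_prod_mul σs π' hcommπσ', ← hσ]
    rw [← mul_assoc, ← mul_assoc, hdisjσμ'.commute.eq]
  have hsuppmul : ∀ i, (σs i * π i).support ⊆ (σs i).support := fun i =>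
    (Equiv.Perm.support_mul_le _ _).trans (sup_le le_rfl (hsubπ i))
  have hsuppmul' : ∀ i, (σs i * π' i).support ⊆ (σs i).support := fun i =>
    (Equiv.Perm.support_mul_le _ _).trans (sup_le le_rfl (hsubπ' i))
  have hpwφ : (μ₀ :: List.ofFn (fun i => σs i * π i)).Pairwise Equiv.Perm.Disjoint := by
    rw [List.pairwise_cons]
    constructor
    · intro g hg
      obtain ⟨i, rfl⟩ := List.mem_ofFn.mp hg
      exact disjoint_mono hdisjσμ.symm subset_rfl ((hsuppmul i).trans (hsubσ i))
    · rw [List.pairwise_ofFn]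
      intro i j hij
      exact disjoint_mono (hdisjσ i j (ne_of_lt hij)) (hsuppmul i) (hsuppmul j)
  have hpwψ : (μ₀' :: List.ofFn (fun i => σs i * π' i)).Pairwise Equiv.Perm.Disjoint := by
    rw [List.pairwise_cons]
    constructor
    · intro g hg
      obtain ⟨i, rfl⟩ := List.mem_ofFn.mp hg
      exact disjoint_mono hdisjσμ'.symm subset_rfl ((hsuppmul' i).trans (hsubσ i))
    · rw [List.pairwise_ofFn]
      intro i j hij
      exact disjoint_mono (hdisjσ i j (ne_of_lt hij)) (hsuppmul' i) (hsuppmul' j)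
  have hCTφ : (φ (a * b)).cycleType
      = μ₀.cycleType + ∑ i, (σs i * π i).cycleType := by
    rw [hdecompφ, cycleType_list_prod hpwφ, List.map_cons, List.sum_cons, List.map_ofFn]
    congr 1
    rw [← List.sum_ofFn]
    rfl
  have hCTψ : (ψ (a * b)).cycleType
      = μ₀'.cycleType + ∑ i, (σs i * π' i).cycleType := by
    rw [hdecompψ, cycleType_list_prod hpwψ, List.map_cons, List.sum_cons, List.map_ofFn]
    congr 1
    rw [← List.sum_ofFn]
    rfl
  -- coprimality per block
  have hcoπ : ∀ i, Nat.Coprime (orderOf (σs i)) (orderOf (π i)) := fun i =>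
    Nat.Coprime.coprime_dvd_right (hordπi i)
      (Nat.Coprime.coprime_dvd_left (hordσi i) hcopφ.symm)
  have hcoπ' : ∀ i, Nat.Coprime (orderOf (σs i)) (orderOf (π' i)) := fun i =>
    Nat.Coprime.coprime_dvd_right (hordπi' i)
      (Nat.Coprime.coprime_dvd_left (hordσi i) hcopψ.symm)
  -- labels
  set N := orderOf σ with hN
  have hdN : ∀ i, k i ≠ 0 → d i ∣ N := by
    intro i hk
    have h1 : d i ∈ (σs i).cycleType := by
      rw [hCTσ i]
      exact Multiset.mem_replicate.mpr ⟨hk, rfl⟩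
    have h2 : d i ∣ orderOf (σs i) := by
      rw [← Equiv.Perm.lcm_cycleType]
      exact Multiset.dvd_lcm h1
    exact h2.trans (hordσi i)
  have hlabμ : ∀ L ∈ μ₀.cycleType, Nat.gcd L (N ^ L) = 1 := by
    intro L hL
    have h1 : L ∣ orderOf μ₀ := by
      rw [← Equiv.Perm.lcm_cycleType]
      exact Multiset.dvd_lcm hL
    have h2 : Nat.Coprime L N := Nat.Coprime.coprime_dvd_left (h1.trans hordμ) hcopφ
    exact Nat.Coprime.pow_right _ h2
  have hlabμ' : ∀ L ∈ μ₀'.cycleType, Nat.gcd L (N ^ L) = 1 := by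
    intro L hL
    have h1 : L ∣ orderOf μ₀' := by
      rw [← Equiv.Perm.lcm_cycleType]
      exact Multiset.dvd_lcm hL
    have h2 : Nat.Coprime L N := Nat.Coprime.coprime_dvd_left (h1.trans hordμ') hcopψ
    exact Nat.Coprime.pow_right _ h2
  have hlabQ : ∀ i, k i ≠ 0 → ∀ L ∈ (σs i * π i).cycleType, Nat.gcd L (N ^ L) = d i := by
    intro i hk L hL
    obtain ⟨m, hm, hmem⟩ :=
      mem_cycleType_mul (hd2 i hk) (hcommπ i) (hsubπ i) (hcoπ i) (hCTσ i) L hL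
    have hL0 : (0 : ℕ) < L := lt_of_lt_of_le two_pos (Equiv.Perm.two_le_of_mem_cycleType hL)
    have hmcop : Nat.Coprime m N := by
      rcases hmem with rfl | hmem
      · exact Nat.coprime_one_left N
      · have h1 : m ∣ orderOf (π i) := by
          rw [← Equiv.Perm.lcm_cycleType]
          exact Multiset.dvd_lcm hmem
        exact Nat.Coprime.coprime_dvd_left (h1.trans (hordπi i)) hcopφ
    exact label_eq (hdN i hk) hm hmcop hL0
  have hlabQ' : ∀ i, k i ≠ 0 → ∀ L ∈ (σs i * π' i).cycleType, Nat.gcd L (N ^ L) = d i := by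
    intro i hk L hL
    obtain ⟨m, hm, hmem⟩ :=
      mem_cycleType_mul (hd2 i hk) (hcommπ' i) (hsubπ' i) (hcoπ' i) (hCTσ i) L hL
    have hL0 : (0 : ℕ) < L := lt_of_lt_of_le two_pos (Equiv.Perm.two_le_of_mem_cycleType hL)
    have hmcop : Nat.Coprime m N := by
      rcases hmem with rfl | hmem
      · exact Nat.coprime_one_left N
      · have h1 : m ∣ orderOf (π' i) := by
          rw [← Equiv.Perm.lcm_cycleType]
          exact Multiset.dvd_lcm hmem
        exact Nat.Coprime.coprime_dvd_left (h1.trans (hordπi' i)) hcopψ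
    exact label_eq (hdN i hk) hm hmcop hL0
  have hQ0 : ∀ i, k i = 0 → (σs i * π i).cycleType = 0 := by
    intro i hk
    rw [hk0σ i hk, hk0π i hk, one_mul, Equiv.Perm.cycleType_one]
  have hQ0' : ∀ i, k i = 0 → (σs i * π' i).cycleType = 0 := by
    intro i hk
    rw [hk0σ i hk, hk0π' i hk, one_mul, Equiv.Perm.cycleType_one]
  -- separation helpers
  have hsep1 : ∀ (μ : Equiv.Perm (Fin n)) (Q : Fin l → Multiset ℕ),
      (∀ L ∈ μ.cycleType, Nat.gcd L (N ^ L) = 1) →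
      (∀ i, k i = 0 → Q i = 0) →
      (∀ i, k i ≠ 0 → ∀ L ∈ Q i, Nat.gcd L (N ^ L) = d i) →
      Multiset.filter (fun L => Nat.gcd L (N ^ L) = 1) (μ.cycleType + ∑ i, Q i)
        = μ.cycleType := by
    intro μ Q hμlab hQz hQlab
    rw [Multiset.filter_add, filter_finset_sum, Multiset.filter_eq_self.mpr hμlab,
      Finset.sum_eq_zero, add_zero]
    intro i _
    by_cases hk : k i = 0
    · rw [hQz i hk, Multiset.filter_zero]
    · apply Multiset.filter_eq_nil.mpr
      intro L hL h
      rw [hQlab i hk L hL] at h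
      have := hd2 i hk
      omega
  have hsep2 : ∀ (μ : Equiv.Perm (Fin n)) (Q : Fin l → Multiset ℕ) (i : Fin l), k i ≠ 0 →
      (∀ L ∈ μ.cycleType, Nat.gcd L (N ^ L) = 1) →
      (∀ j, k j = 0 → Q j = 0) →
      (∀ j, k j ≠ 0 → ∀ L ∈ Q j, Nat.gcd L (N ^ L) = d j) →
      Multiset.filter (fun L => Nat.gcd L (N ^ L) = d i) (μ.cycleType + ∑ j, Q j)
        = Q i := by
    intro μ Q i hk hμlab hQz hQlab
    rw [Multiset.filter_add, filter_finset_sum]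
    rw [Multiset.filter_eq_nil.mpr, zero_add]
    · rw [Finset.sum_eq_single i]
      · exact Multiset.filter_eq_self.mpr (hQlab i hk)
      · intro j _ hji
        by_cases hkj : k j = 0
        · rw [hQz j hkj, Multiset.filter_zero]
        · apply Multiset.filter_eq_nil.mpr
          intro L hL h
          exact hji (hd ((hQlab j hkj L hL).symm.trans h))
      · intro hi
        exact absurd (Finset.mem_univ i) hi
    · intro L hL h
      rw [hμlab L hL] at h
      have := hd2 i hk
      omega
  -- main chain
  rw [hE1, Equiv.Perm.isConj_iff_cycleType_eq, hCTφ, hCTψ]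
  constructor
  · intro hCT
    have hμeq : μ₀.cycleType = μ₀'.cycleType := by
      rw [← hsep1 μ₀ _ hlabμ hQ0 hlabQ, hCT, hsep1 μ₀' _ hlabμ' hQ0' hlabQ']
    have hπeq : ∀ i, (π i).cycleType = (π' i).cycleType := by
      intro i
      by_cases hk : k i = 0
      · rw [hk0π i hk, hk0π' i hk]
      · have hQeq : (σs i * π i).cycleType = (σs i * π' i).cycleType := by
          rw [← hsep2 μ₀ _ i hk hlabμ hQ0 hlabQ, hCT, hsep2 μ₀' _ i hk hlabμ' hQ0' hlabQ']
        exact (cycleType_mul_eq_iff (hd2 i hk) (hcommπ i) (hsubπ i) (hcoπ i)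
          (hcommπ' i) (hsubπ' i) (hcoπ' i) (hCTσ i)).mp hQeq
    exact ⟨Equiv.Perm.isConj_iff_cycleType_eq.mpr hμeq,
      fun i => Equiv.Perm.isConj_iff_cycleType_eq.mpr (hπeq i)⟩
  · rintro ⟨h1, h2⟩
    have hμeq := Equiv.Perm.isConj_iff_cycleType_eq.mp h1
    have hπeq : ∀ i, (π i).cycleType = (π' i).cycleType :=
      fun i => Equiv.Perm.isConj_iff_cycleType_eq.mp (h2 i)
    have hQeq : ∀ i, (σs i * π i).cycleType = (σs i * π' i).cycleType := by
      intro i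
      by_cases hk : k i = 0
      · rw [hk0π i hk, hk0π' i hk]
      · exact (cycleType_mul_eq_iff (hd2 i hk) (hcommπ i) (hsubπ i) (hcoπ i)
          (hcommπ' i) (hsubπ' i) (hcoπ' i) (hCTσ i)).mpr (hπeq i)
    rw [hμeq]
    congr 1
    exact Finset.sum_congr rfl (fun i _ => hQeq i)
end

section
/- Let A be an abelian group generated by two elements a, b, and let φ, ψ : A → S_n be homomorphisms with φ(a) = ψ(a) = σ, where σ = σ₁⋯σ_l with each σᵢ a product of kᵢ pairwise disjoint cycles of length dᵢ and the dᵢ pairwise distinct. Then φ and ψ are conjugate if and only if, for every g ∈ A, the S_{Fix(σ)}-components of φ(g) and ψ(g) are conjugate in S_n and, for each 1 ≤ i ≤ l, the Cent₀(σᵢ)-components of φ(g) and ψ(g) are conjugate in S_n (i.e. φ and ψ are element-conjugate on restriction to S_{Fix(σ)} and to each Cent₀(σᵢ)). -/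
open Equiv Equiv.Perm Finset

set_option linter.unusedSectionVars false
set_option linter.unusedVariables false
set_option maxHeartbeats 1600000

theorem Equiv.Perm.apply_inv_self {β : Type*} (f : Equiv.Perm β) (x : β) : f (f⁻¹ x) = x :=
  f.apply_symm_apply x

theorem Equiv.Perm.inv_apply_self {β : Type*} (f : Equiv.Perm β) (x : β) : f⁻¹ (f x) = x :=
  f.symm_apply_apply x

namespace LG



variable {α : Type*} [Fintype α] [DecidableEq α]

lemma apply_mem_of_support_subset {u : Perm α} {S : Finset α} (hu : u.support ⊆ S)
    {a : α} (ha : a ∈ S) : u a ∈ S := by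
  by_cases h : a ∈ u.support
  · exact hu (Equiv.Perm.apply_mem_support.2 h)
  · rwa [Equiv.Perm.notMem_support.1 h]

lemma prod_apply_of_fixed {l : List (Perm α)} {a : α} (h : ∀ f ∈ l, f a = a) :
    l.prod a = a := by
  induction l with
  | nil => rfl
  | cons f t ih =>
    rw [List.prod_cons, Equiv.Perm.mul_apply,
      ih (fun g hg => h g (List.mem_cons_of_mem f hg)), h f (List.mem_cons_self)]

lemma notmem_of_disjoint {S T : Finset α} (h : Disjoint S T) {a : α} (ha : a ∈ S) : a ∉ T :=
  fun hb => (Finset.disjoint_left.1 h) ha hb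

lemma ofFn_prod_apply_of_mem : ∀ {l : ℕ} {S : Fin l → Finset α} {u : Fin l → Perm α},
    (∀ i, (u i).support ⊆ S i) → (∀ i j, i ≠ j → Disjoint (S i) (S j)) →
    ∀ {i : Fin l} {a : α}, a ∈ S i → (List.ofFn u).prod a = u i a := by
  intro l
  induction l with
  | zero => intro S u hu hS i; exact i.elim0
  | succ m ih =>
    intro S u hu hS i a ha
    rw [List.ofFn_succ, List.prod_cons, Equiv.Perm.mul_apply]
    induction i using Fin.cases with
    | zero =>
      have h2 : (List.ofFn (fun j : Fin m => u j.succ)).prod a = a := by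
        apply prod_apply_of_fixed
        intro f hf
        obtain ⟨j, rfl⟩ := (List.mem_ofFn.1 hf)
        apply Equiv.Perm.notMem_support.1
        intro hsup
        exact notmem_of_disjoint (hS 0 j.succ (Fin.succ_ne_zero j).symm) ha (hu j.succ hsup)
      rw [h2]
    | succ j =>
      have h2 : (List.ofFn (fun j : Fin m => u j.succ)).prod a = u j.succ a :=
        ih (fun i => hu i.succ) (fun i i' hne => hS i.succ i'.succ (by simpa using hne)) ha
      rw [h2]
      apply Equiv.Perm.notMem_support.1
      intro hsup
      exact notmem_of_disjoint (hS j.succ 0 (Fin.succ_ne_zero j))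
        (apply_mem_of_support_subset (hu j.succ) ha) (hu 0 hsup)

lemma ofFn_prod_apply_of_not_mem {l : ℕ} {S : Fin l → Finset α} {u : Fin l → Perm α}
    (hu : ∀ i, (u i).support ⊆ S i) {a : α} (ha : ∀ i, a ∉ S i) :
    (List.ofFn u).prod a = a := by
  apply prod_apply_of_fixed
  intro f hf
  obtain ⟨j, rfl⟩ := (List.mem_ofFn.1 hf)
  exact Equiv.Perm.notMem_support.1 (fun hs => ha j (hu j hs))

lemma ofFn_prod_support_subset {l : ℕ} {S : Fin l → Finset α} {u : Fin l → Perm α}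
    (hu : ∀ i, (u i).support ⊆ S i) :
    (List.ofFn u).prod.support ⊆ Finset.univ.biUnion S := by
  intro a ha
  by_contra hc
  simp only [Finset.mem_biUnion, Finset.mem_univ, true_and, not_exists] at hc
  exact (Equiv.Perm.mem_support.1 ha) (ofFn_prod_apply_of_not_mem hu hc)

section Parts
variable {l : ℕ} {S : Fin l → Finset α}

/-- abbreviation for the hypotheses -/
def IsParts (S : Fin l → Finset α) (u₀ : Perm α) (u : Fin l → Perm α) : Prop :=
  u₀.support ⊆ (Finset.univ.biUnion S)ᶜ ∧ ∀ i, (u i).support ⊆ S i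

lemma mem_compl_biUnion {a : α} : a ∈ (Finset.univ.biUnion S)ᶜ ↔ ∀ i, a ∉ S i := by
  simp [Finset.mem_compl, Finset.mem_biUnion]

lemma parts_apply_of_mem (hS : ∀ i j, i ≠ j → Disjoint (S i) (S j))
    {u₀ : Perm α} {u : Fin l → Perm α} (h : IsParts S u₀ u)
    {i : Fin l} {a : α} (ha : a ∈ S i) : (u₀ * (List.ofFn u).prod) a = u i a := by
  rw [Equiv.Perm.mul_apply, ofFn_prod_apply_of_mem h.2 hS ha]
  exact Equiv.Perm.notMem_support.1 (fun hs =>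
    (mem_compl_biUnion.1 (h.1 hs)) i (apply_mem_of_support_subset (h.2 i) ha))

lemma parts_apply_of_not_mem {u₀ : Perm α} {u : Fin l → Perm α} (h : IsParts S u₀ u)
    {a : α} (ha : ∀ i, a ∉ S i) : (u₀ * (List.ofFn u).prod) a = u₀ a := by
  rw [Equiv.Perm.mul_apply, ofFn_prod_apply_of_not_mem h.2 ha]

lemma isParts_mul {u₀ v₀ : Perm α} {u v : Fin l → Perm α}
    (hu : IsParts S u₀ u) (hv : IsParts S v₀ v) :
    IsParts S (u₀ * v₀) (fun i => u i * v i) := by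
  constructor
  · exact (Equiv.Perm.support_mul_le u₀ v₀).trans (sup_le hu.1 hv.1)
  · intro i
    exact (Equiv.Perm.support_mul_le (u i) (v i)).trans (sup_le (hu.2 i) (hv.2 i))

lemma parts_mul (hS : ∀ i j, i ≠ j → Disjoint (S i) (S j)) {u₀ v₀ : Perm α}
    {u v : Fin l → Perm α} (hu : IsParts S u₀ u) (hv : IsParts S v₀ v) :
    (u₀ * (List.ofFn u).prod) * (v₀ * (List.ofFn v).prod) =
      (u₀ * v₀) * (List.ofFn (fun i => u i * v i)).prod := by
  have hP := isParts_mul hu hv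
  ext a
  by_cases ha : ∃ i, a ∈ S i
  · obtain ⟨i, hai⟩ := ha
    rw [Equiv.Perm.mul_apply, parts_apply_of_mem hS hv hai, parts_apply_of_mem hS hu
      (apply_mem_of_support_subset (hv.2 i) hai), parts_apply_of_mem hS hP hai,
      Equiv.Perm.mul_apply]
  · push_neg at ha
    rw [Equiv.Perm.mul_apply, parts_apply_of_not_mem hv ha, parts_apply_of_not_mem hu
      (fun i => mem_compl_biUnion.1
        (apply_mem_of_support_subset hv.1 (mem_compl_biUnion.2 ha)) i),
      parts_apply_of_not_mem hP ha, Equiv.Perm.mul_apply]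

lemma parts_one : ((1 : Perm α) * (List.ofFn (fun _ : Fin l => (1 : Perm α))).prod) = 1 := by
  simp

lemma isParts_one : IsParts S (1 : Perm α) (fun _ : Fin l => (1 : Perm α)) := by
  constructor <;> simp

lemma isParts_inv {u₀ : Perm α} {u : Fin l → Perm α} (hu : IsParts S u₀ u) :
    IsParts S u₀⁻¹ (fun i => (u i)⁻¹) := by
  constructor
  · rw [Equiv.Perm.support_inv]; exact hu.1
  · intro i; rw [Equiv.Perm.support_inv]; exact hu.2 i

lemma parts_inv (hS : ∀ i j, i ≠ j → Disjoint (S i) (S j)) {u₀ : Perm α}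
    {u : Fin l → Perm α} (hu : IsParts S u₀ u) :
    (u₀ * (List.ofFn u).prod)⁻¹ = u₀⁻¹ * (List.ofFn (fun i => (u i)⁻¹)).prod := by
  apply inv_eq_of_mul_eq_one_right
  rw [parts_mul hS hu (isParts_inv hu)]
  have h1 : (fun i => u i * (u i)⁻¹) = fun _ : Fin l => (1 : Perm α) := by
    funext i; simp
  rw [h1, mul_inv_cancel]
  exact parts_one

lemma isParts_pow {u₀ : Perm α} {u : Fin l → Perm α} (hu : IsParts S u₀ u) (n : ℕ) :
    IsParts S (u₀ ^ n) (fun i => (u i) ^ n) :=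
  ⟨(Equiv.Perm.support_pow_le u₀ n).trans hu.1,
    fun i => (Equiv.Perm.support_pow_le (u i) n).trans (hu.2 i)⟩

lemma isParts_zpow {u₀ : Perm α} {u : Fin l → Perm α} (hu : IsParts S u₀ u) (j : ℤ) :
    IsParts S (u₀ ^ j) (fun i => (u i) ^ j) :=
  ⟨(Equiv.Perm.support_zpow_le u₀ j).trans hu.1,
    fun i => (Equiv.Perm.support_zpow_le (u i) j).trans (hu.2 i)⟩

lemma parts_pow (hS : ∀ i j, i ≠ j → Disjoint (S i) (S j)) {u₀ : Perm α}
    {u : Fin l → Perm α} (hu : IsParts S u₀ u) (n : ℕ) :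
    (u₀ * (List.ofFn u).prod) ^ n = u₀ ^ n * (List.ofFn (fun i => (u i) ^ n)).prod := by
  induction n with
  | zero => simpa using parts_one.symm
  | succ n ih =>
    rw [pow_succ, ih, parts_mul hS (isParts_pow hu n) hu]
    have h1 : (fun i => u i ^ n * u i) = fun i => u i ^ (n + 1) := by
      funext i; rw [pow_succ]
    rw [h1, pow_succ]

lemma parts_zpow (hS : ∀ i j, i ≠ j → Disjoint (S i) (S j)) {u₀ : Perm α}
    {u : Fin l → Perm α} (hu : IsParts S u₀ u) (j : ℤ) :
    (u₀ * (List.ofFn u).prod) ^ j = u₀ ^ j * (List.ofFn (fun i => (u i) ^ j)).prod := by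
  cases j with
  | ofNat n =>
    have h1 : (fun i => (u i) ^ ((n : ℤ))) = fun i => (u i) ^ n := by
      funext i; rw [zpow_natCast]
    rw [Int.ofNat_eq_coe, zpow_natCast, zpow_natCast, h1, parts_pow hS hu n]
  | negSucc n =>
    have h1 : (fun i => (u i) ^ (Int.negSucc n)) = fun i => ((u i) ^ (n + 1))⁻¹ := by
      funext i; rw [zpow_negSucc]
    rw [zpow_negSucc, zpow_negSucc, h1, parts_pow hS hu (n + 1),
      parts_inv hS (isParts_pow hu (n + 1))]

lemma parts_unique (hS : ∀ i j, i ≠ j → Disjoint (S i) (S j)) {u₀ v₀ : Perm α}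
    {u v : Fin l → Perm α} (hu : IsParts S u₀ u) (hv : IsParts S v₀ v)
    (heq : u₀ * (List.ofFn u).prod = v₀ * (List.ofFn v).prod) :
    u₀ = v₀ ∧ ∀ i, u i = v i := by
  constructor
  · ext a
    by_cases ha : ∃ i, a ∈ S i
    · obtain ⟨i, hai⟩ := ha
      have h1 : u₀ a = a := Equiv.Perm.notMem_support.1
        (fun hs => mem_compl_biUnion.1 (hu.1 hs) i hai)
      have h2 : v₀ a = a := Equiv.Perm.notMem_support.1
        (fun hs => mem_compl_biUnion.1 (hv.1 hs) i hai)
      rw [h1, h2]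
    · push_neg at ha
      have h3 : (u₀ * (List.ofFn u).prod) a = (v₀ * (List.ofFn v).prod) a := by rw [heq]
      rwa [parts_apply_of_not_mem hu ha, parts_apply_of_not_mem hv ha] at h3
  · intro i
    ext a
    by_cases ha : a ∈ S i
    · have h3 : (u₀ * (List.ofFn u).prod) a = (v₀ * (List.ofFn v).prod) a := by rw [heq]
      rwa [parts_apply_of_mem hS hu ha, parts_apply_of_mem hS hv ha] at h3
    · rw [Equiv.Perm.notMem_support.1 (fun hs => ha (hu.2 i hs)),
        Equiv.Perm.notMem_support.1 (fun hs => ha (hv.2 i hs))]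

end Parts

variable {α : Type*} [Fintype α] [DecidableEq α]



/-- `(σ^m p^j) x = x`, the stabilizer condition. -/
abbrev St (σ p : Perm α) (x : α) (m j : ℤ) : Prop := (σ ^ m * p ^ j) x = x

lemma st_mul_pow {σ p : Perm α} (hc : Commute p σ) (m j m' j' : ℤ) :
    (σ ^ m * p ^ j) * (σ ^ m' * p ^ j') = σ ^ (m + m') * p ^ (j + j') := by
  have h : p ^ j * σ ^ m' = σ ^ m' * p ^ j := (hc.zpow_zpow j m')
  rw [zpow_add, zpow_add, mul_assoc, ← mul_assoc (p ^ j), h, mul_assoc, mul_assoc]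

lemma st_add {σ p : Perm α} (hc : Commute p σ) {x : α} {m j m' j' : ℤ}
    (h1 : St σ p x m j) (h2 : St σ p x m' j') : St σ p x (m + m') (j + j') := by
  have := st_mul_pow hc m j m' j'
  unfold St
  rw [← this, Equiv.Perm.mul_apply, h2, h1]

lemma st_zero (σ p : Perm α) (x : α) : St σ p x 0 0 := by simp [St]

lemma st_zsmul {σ p : Perm α} (hc : Commute p σ) {x : α} {m j : ℤ}
    (h : St σ p x m j) (e : ℤ) : St σ p x (m * e) (j * e) := by
  have h1 : (σ ^ m * p ^ j) ^ e = σ ^ (m * e) * p ^ (j * e) := by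
    rw [(hc.symm.zpow_zpow m j).mul_zpow, ← zpow_mul, ← zpow_mul]
  unfold St
  rw [← h1]
  exact zpow_apply_eq_self_of_apply_eq_self h e

lemma st_neg {σ p : Perm α} (hc : Commute p σ) {x : α} {m j : ℤ}
    (h : St σ p x m j) : St σ p x (-m) (-j) := by
  simpa using st_zsmul hc h (-1)

private def cprop (σ p : Perm α) (x : α) (c : ℕ) : Prop :=
  0 < c ∧ ∃ s : ℤ, St σ p x s c

lemma cprop_exists (σ p : Perm α) (x : α) : ∃ c, cprop σ p x c := by
  refine ⟨orderOf p, orderOf_pos p, 0, ?_⟩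
  simp [St, zpow_natCast, pow_orderOf_eq_one]

/-- The minimal positive `c` such that `σ^s p^c` fixes `x` for some `s`. -/
noncomputable def cexp (σ p : Perm α) (x : α) : ℕ :=
  @Nat.find _ (Classical.decPred _) (cprop_exists σ p x)

lemma cexp_spec (σ p : Perm α) (x : α) : cprop σ p x (cexp σ p x) :=
  @Nat.find_spec _ (Classical.decPred _) _

lemma cexp_pos (σ p : Perm α) (x : α) : 0 < cexp σ p x := (cexp_spec σ p x).1

lemma cexp_min {σ p : Perm α} {x : α} {c : ℕ} (h : cprop σ p x c) : cexp σ p x ≤ c :=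
  @Nat.find_min' _ (Classical.decPred _) _ _ h

/-- A choice of `s` with `σ^s p^(cexp x)` fixing `x`. -/
noncomputable def sexp (σ p : Perm α) (x : α) : ℤ :=
  Classical.choose (cexp_spec σ p x).2

lemma sexp_spec (σ p : Perm α) (x : α) : St σ p x (sexp σ p x) (cexp σ p x) :=
  Classical.choose_spec (cexp_spec σ p x).2

section Char

variable {d : ℕ} {σ p : Perm α}

lemma st_dvd_c (hc : Commute p σ) {x : α} {m j : ℤ} (h : St σ p x m j) :
    (cexp σ p x : ℤ) ∣ j := by
  set c : ℕ := cexp σ p x with hcdef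
  have hc0 : (0 : ℤ) < (c : ℤ) := Int.natCast_pos.2 (cexp_pos σ p x)
  set e : ℤ := j / (c : ℤ) with he
  set r : ℤ := j % (c : ℤ) with hr
  have hj : (c : ℤ) * e + r = j := Int.mul_ediv_add_emod j c
  by_cases hr0 : r = 0
  · refine ⟨e, ?_⟩
    rw [← hj, hr0]; ring
  · exfalso
    have hs := st_zsmul hc (st_neg hc (sexp_spec σ p x)) e
    have h2 := st_add hc h hs
    -- h2 : St σ p x (m + -(sexp) * e) (j + -(c) * e)  and j - c*e = r
    have hje : j + -(c : ℤ) * e = r := by linarith [hj]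
    rw [hje] at h2
    have hrpos : 0 < r := lt_of_le_of_ne (Int.emod_nonneg j (by omega)) (Ne.symm hr0)
    have hrlt : r < c := Int.emod_lt_of_pos j hc0
    have htn : ((r.toNat : ℕ) : ℤ) = r := Int.toNat_of_nonneg (by omega)
    have : c ≤ r.toNat := cexp_min ⟨by omega, ⟨m + -sexp σ p x * e, by rw [htn]; exact h2⟩⟩
    omega

lemma st_char (hc : Commute p σ) (hσ : ∀ (x : α) (m : ℤ), (σ ^ m) x = x ↔ (d : ℤ) ∣ m)
    {x : α} {m j : ℤ} :
    St σ p x m j ↔ ∃ e : ℤ, j = (cexp σ p x : ℤ) * e ∧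
      (d : ℤ) ∣ m - e * sexp σ p x := by
  constructor
  · intro h
    obtain ⟨e, he⟩ := st_dvd_c hc h
    refine ⟨e, he, ?_⟩
    have hs := st_zsmul hc (st_neg hc (sexp_spec σ p x)) e
    have h2 := st_add hc h hs
    have hje : j + -(cexp σ p x : ℤ) * e = 0 := by rw [he]; ring
    rw [hje] at h2
    have h3 : (σ ^ (m + -sexp σ p x * e)) x = x := by
      have h4 : (σ ^ (m + -sexp σ p x * e) * p ^ (0 : ℤ)) x = x := h2
      simpa using h4
    have h5 := (hσ x _).1 h3
    have h6 : m - e * sexp σ p x = m + -sexp σ p x * e := by ring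
    rw [h6]; exact h5
  · rintro ⟨e, rfl, hdvd⟩
    have hs := st_zsmul hc (sexp_spec σ p x) e
    have h0 : St σ p x (m - e * sexp σ p x) 0 := by
      have h4 : (σ ^ (m - e * sexp σ p x)) x = x := (hσ x _).2 hdvd
      simpa [St] using h4
    have h7 := st_add hc h0 hs
    have h8 : m - e * sexp σ p x + sexp σ p x * e = m := by ring
    have h9 : (0 : ℤ) + (cexp σ p x : ℤ) * e = (cexp σ p x : ℤ) * e := by ring
    rw [h8, h9] at h7
    exact h7

/-- The orbit invariant of a point: minimal `c` and the twist `s` mod `d`. -/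
noncomputable def invf (d : ℕ) (σ p : Perm α) (x : α) : ℕ × ZMod d :=
  (cexp σ p x, ((sexp σ p x : ℤ) : ZMod d))

lemma st_iff_of_invf_eq {q : Perm α} (hd : 0 < d)
    (hcp : Commute p σ) (hcq : Commute q σ)
    (hσ : ∀ (x : α) (m : ℤ), (σ ^ m) x = x ↔ (d : ℤ) ∣ m)
    {x y : α} (h : invf d σ p x = invf d σ q y) {m j : ℤ} :
    St σ p x m j ↔ St σ q y m j := by
  have h1 : cexp σ p x = cexp σ q y := congrArg Prod.fst h
  have h2 : ((sexp σ p x : ℤ) : ZMod d) = ((sexp σ q y : ℤ) : ZMod d) :=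
    congrArg Prod.snd h
  have hdvd : (d : ℤ) ∣ sexp σ p x - sexp σ q y := by
    rwa [← ZMod.intCast_zmod_eq_zero_iff_dvd, Int.cast_sub, sub_eq_zero]
  rw [st_char hcp hσ, st_char hcq hσ, h1]
  constructor
  · rintro ⟨e, he, hd2⟩
    refine ⟨e, he, ?_⟩
    have : m - e * sexp σ q y = (m - e * sexp σ p x) + e * (sexp σ p x - sexp σ q y) := by ring
    rw [this]
    exact dvd_add hd2 (Dvd.dvd.mul_left hdvd e)
  · rintro ⟨e, he, hd2⟩
    refine ⟨e, he, ?_⟩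
    have : m - e * sexp σ p x = (m - e * sexp σ q y) - e * (sexp σ p x - sexp σ q y) := by ring
    rw [this]
    exact dvd_sub hd2 (Dvd.dvd.mul_left hdvd e)

end Char

section Count

/-- number of points with given invariant -/
noncomputable def Nv (d : ℕ) (σ p : Perm α) (v : ℕ × ZMod d) : ℕ :=
  #(Finset.univ.filter fun x => invf d σ p x = v)

lemma count_eq {d : ℕ} (hd : 0 < d) (σ p q : Perm α)
    (hcp : Commute p σ) (hcq : Commute q σ)
    (hσ : ∀ (x : α) (m : ℤ), (σ ^ m) x = x ↔ (d : ℤ) ∣ m)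
    (hfix : ∀ m j : ℤ,
      #(Finset.univ.filter fun x => (σ ^ m * p ^ j) x = x) =
      #(Finset.univ.filter fun x => (σ ^ m * q ^ j) x = x)) :
    ∀ v : ℕ × ZMod d, Nv d σ p v = Nv d σ q v := by
  classical
  haveI : NeZero d := ⟨hd.ne'⟩
  rintro ⟨c₀, s₀⟩
  induction c₀ using Nat.strong_induction_on generalizing s₀ with
  | _ c₀ ih =>
  rcases Nat.eq_zero_or_pos c₀ with h0 | hpos
  · subst h0
    have hzero : ∀ r : Perm α, Nv d σ r (0, s₀) = 0 := by
      intro r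
      rw [Nv, Finset.card_eq_zero, Finset.filter_eq_empty_iff]
      intro x _ h
      have : cexp σ r x = 0 := congrArg Prod.fst h
      exact absurd this (cexp_pos σ r x).ne'
    rw [hzero p, hzero q]
  · set m₀ : ℤ := (s₀.val : ℤ) with hm₀def
    have hm₀ : ((m₀ : ℤ) : ZMod d) = s₀ := by
      rw [hm₀def, Int.cast_natCast]
      exact ZMod.natCast_rightInverse s₀
    set Pv : ℕ × ZMod d → Prop :=
      (fun w => ∃ e : ℤ, (c₀ : ℤ) = (w.1 : ℤ) * e ∧ (e : ZMod d) * w.2 = s₀) with hPv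
    set W : Finset (ℕ × ZMod d) :=
      ((Finset.range c₀) ×ˢ Finset.univ).filter Pv with hWdef
    have hWlt : ∀ w ∈ W, w.1 < c₀ := by
      intro w hw
      rw [hWdef, Finset.mem_filter, Finset.mem_product, Finset.mem_range] at hw
      exact hw.1.1
    have key : ∀ r : Perm α, Commute r σ →
        #(Finset.univ.filter fun x => (σ ^ m₀ * r ^ (c₀ : ℤ)) x = x) =
          Nv d σ r (c₀, s₀) + ∑ w ∈ W, Nv d σ r w := by
      intro r hcr
      have hx : ∀ x : α, ((σ ^ m₀ * r ^ (c₀ : ℤ)) x = x) ↔ Pv (invf d σ r x) := by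
        intro x
        rw [show ((σ ^ m₀ * r ^ (c₀ : ℤ)) x = x) ↔ St σ r x m₀ c₀ from Iff.rfl,
          st_char hcr hσ, hPv]
        constructor
        · rintro ⟨e, he, hdvd⟩
          refine ⟨e, he, ?_⟩
          rw [← ZMod.intCast_zmod_eq_zero_iff_dvd] at hdvd
          push_cast at hdvd
          rw [sub_eq_zero] at hdvd
          rw [invf]
          rw [hm₀] at hdvd
          rw [← hdvd]
        · rintro ⟨e, he, heq⟩
          refine ⟨e, he, ?_⟩
          rw [← ZMod.intCast_zmod_eq_zero_iff_dvd]
          push_cast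
          rw [sub_eq_zero, hm₀]
          rw [invf] at heq
          rw [← heq]
      have hfil : (Finset.univ.filter fun x => (σ ^ m₀ * r ^ (c₀ : ℤ)) x = x) =
          (Finset.univ.filter fun x => Pv (invf d σ r x)) := by
        apply Finset.filter_congr
        intro x _
        exact hx x
      have hsplit : (Finset.univ.filter fun x => Pv (invf d σ r x)) =
          (Finset.univ.filter fun x => invf d σ r x = (c₀, s₀)) ∪
          (Finset.univ.filter fun x => Pv (invf d σ r x) ∧ (invf d σ r x).1 ≠ c₀) := by
        ext x
        simp only [Finset.mem_union, Finset.mem_filter, Finset.mem_univ, true_and]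
        constructor
        · intro hp
          by_cases hc : (invf d σ r x).1 = c₀
          · left
            obtain ⟨e, he, hs⟩ := hp
            rw [hc] at he
            have he1 : e = 1 := by
              have hc0 : (c₀ : ℤ) ≠ 0 := Int.natCast_ne_zero.2 hpos.ne'
              have he' : (c₀ : ℤ) * e = c₀ * 1 := by rw [mul_one]; exact he.symm
              exact mul_left_cancel₀ hc0 he'
            rw [he1, Int.cast_one, one_mul] at hs
            exact Prod.ext hc hs
          · right; exact ⟨hp, hc⟩
        · intro h
          rcases h with h | h
          · exact ⟨1, by simp [h], by simp [h]⟩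
          · exact h.1
      have hdisj : Disjoint (Finset.univ.filter fun x => invf d σ r x = (c₀, s₀))
          (Finset.univ.filter fun x => Pv (invf d σ r x) ∧ (invf d σ r x).1 ≠ c₀) := by
        rw [Finset.disjoint_left]
        intro x h1 h2
        rw [Finset.mem_filter] at h1 h2
        exact h2.2.2 (by rw [h1.2])
      have hsecond : #(Finset.univ.filter fun x =>
          Pv (invf d σ r x) ∧ (invf d σ r x).1 ≠ c₀) = ∑ w ∈ W, Nv d σ r w := by
        have hmem : ∀ x ∈ (Finset.univ.filter fun x =>
            Pv (invf d σ r x) ∧ (invf d σ r x).1 ≠ c₀), invf d σ r x ∈ W := by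
          intro x hxx
          rw [Finset.mem_filter] at hxx
          obtain ⟨-, hp, hne⟩ := hxx
          rw [hWdef, Finset.mem_filter, Finset.mem_product, Finset.mem_range]
          refine ⟨⟨?_, Finset.mem_univ _⟩, hp⟩
          obtain ⟨e, he, -⟩ := hp
          have hdvd : ((invf d σ r x).1 : ℤ) ∣ (c₀ : ℤ) := ⟨e, he⟩
          have hle : ((invf d σ r x).1 : ℤ) ≤ (c₀ : ℤ) :=
            Int.le_of_dvd (Int.natCast_pos.2 hpos) hdvd
          have : (invf d σ r x).1 ≤ c₀ := by exact_mod_cast hle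
          omega
        rw [Finset.card_eq_sum_card_fiberwise hmem]
        apply Finset.sum_congr rfl
        intro w hw
        rw [Nv]
        congr 1
        rw [Finset.filter_filter]
        apply Finset.filter_congr
        intro x _
        constructor
        · rintro ⟨-, h⟩; exact h
        · intro h
          refine ⟨⟨?_, ?_⟩, h⟩
          · rw [h]; rw [hWdef, Finset.mem_filter] at hw; exact hw.2
          · rw [h]; exact (hWlt w hw).ne
      rw [hfil, hsplit, Finset.card_union_of_disjoint hdisj, hsecond, Nv]
    have h1 := key p hcp
    have h2 := key q hcq
    have hsum : ∑ w ∈ W, Nv d σ p w = ∑ w ∈ W, Nv d σ q w := by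
      apply Finset.sum_congr rfl
      intro w hw
      have := ih w.1 (hWlt w hw) w.2
      simpa using this
    have h3 := hfix m₀ (c₀ : ℤ)
    omega

end Count
section Orbits
open scoped Classical

variable {d : ℕ} {σ p q : Perm α}

lemma st_of_eq (hc : Commute p σ) {x : α} {m j m' j' : ℤ}
    (h : (σ ^ m * p ^ j) x = (σ ^ m' * p ^ j') x) : St σ p x (-m' + m) (-j' + j) := by
  have h1 := st_mul_pow hc (-m') (-j') m j
  show (σ ^ (-m' + m) * p ^ (-j' + j)) x = x
  rw [← h1, Equiv.Perm.mul_apply, h, ← Equiv.Perm.mul_apply, st_mul_pow hc]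
  simp

lemma eq_of_st (hc : Commute p σ) {x : α} {m j m' j' : ℤ}
    (h : St σ p x (-m' + m) (-j' + j)) : (σ ^ m * p ^ j) x = (σ ^ m' * p ^ j') x := by
  have h1 : σ ^ m' * p ^ j' * (σ ^ (-m' + m) * p ^ (-j' + j)) = σ ^ m * p ^ j := by
    rw [st_mul_pow hc]
    congr 1 <;> [skip; skip] <;> ring_nf
  rw [← h1, Equiv.Perm.mul_apply, h]

lemma eq_transfer (hd : 0 < d) (hcp : Commute p σ) (hcq : Commute q σ)
    (hσ : ∀ (x : α) (m : ℤ), (σ ^ m) x = x ↔ (d : ℤ) ∣ m)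
    {x y : α} (hinv : invf d σ p x = invf d σ q y) {m j m' j' : ℤ}
    (h : (σ ^ m * p ^ j) x = (σ ^ m' * p ^ j') x) :
    (σ ^ m * q ^ j) y = (σ ^ m' * q ^ j') y :=
  eq_of_st hcq ((st_iff_of_invf_eq hd hcp hcq hσ hinv).1 (st_of_eq hcp h))

/-- The orbit relation of the `⟨σ, p⟩`-action. -/
def OrbRel (σ p : Perm α) (x y : α) : Prop := ∃ m j : ℤ, (σ ^ m * p ^ j) x = y

lemma orbRel_equivalence (σ p : Perm α) (hc : Commute p σ) : Equivalence (OrbRel σ p) where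
  refl x := ⟨0, 0, by simp⟩
  symm {x y} h := by
    obtain ⟨m, j, rfl⟩ := h
    refine ⟨-m, -j, ?_⟩
    rw [← Equiv.Perm.mul_apply, st_mul_pow hc]
    simp
  trans {x y z} h1 h2 := by
    obtain ⟨m, j, rfl⟩ := h1
    obtain ⟨m', j', rfl⟩ := h2
    refine ⟨m' + m, j' + j, ?_⟩
    rw [← Equiv.Perm.mul_apply, st_mul_pow hc]

/-- The orbit setoid of the `⟨σ, p⟩`-action. -/
def orbSetoid (σ p : Perm α) (hc : Commute p σ) : Setoid α :=
  ⟨OrbRel σ p, orbRel_equivalence σ p hc⟩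

lemma st_iff_of_orbRel (hc : Commute p σ) {x y : α} (h : OrbRel σ p x y) (m j : ℤ) :
    St σ p y m j ↔ St σ p x m j := by
  obtain ⟨m', j', rfl⟩ := h
  unfold St
  rw [← Equiv.Perm.mul_apply, st_mul_pow hc]
  rw [show m + m' = m' + m from add_comm m m', show j + j' = j' + j from add_comm j j',
    ← st_mul_pow hc, Equiv.Perm.mul_apply]
  exact ⟨fun hh => (Equiv.injective _) hh, fun hh => by rw [hh]⟩

lemma invf_eq_of_orbRel (hc : Commute p σ)
    (hσ : ∀ (x : α) (m : ℤ), (σ ^ m) x = x ↔ (d : ℤ) ∣ m)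
    {x y : α} (h : OrbRel σ p x y) : invf d σ p x = invf d σ p y := by
  have hst := st_iff_of_orbRel hc h
  have hcx : cexp σ p x = cexp σ p y := by
    apply le_antisymm
    · exact cexp_min ⟨cexp_pos σ p y, ⟨sexp σ p y, (hst _ _).1 (sexp_spec σ p y)⟩⟩
    · exact cexp_min ⟨cexp_pos σ p x, ⟨sexp σ p x, (hst _ _).2 (sexp_spec σ p x)⟩⟩
  have h1 : St σ p x (sexp σ p y) (cexp σ p y) := (hst _ _).1 (sexp_spec σ p y)
  have h2 : St σ p x (sexp σ p x) (cexp σ p x) := sexp_spec σ p x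
  rw [← hcx] at h1
  have h3 := st_add hc h1 (st_neg hc h2)
  have h4 : (σ ^ (sexp σ p y + -sexp σ p x)) x = x := by
    have h5 : ((cexp σ p x : ℤ)) + -(cexp σ p x : ℤ) = 0 := by ring
    rw [h5] at h3
    simpa [St] using h3
  have h6 := (hσ x _).1 h4
  unfold invf
  rw [hcx]
  congr 1
  rw [← sub_eq_zero, ← Int.cast_sub, ZMod.intCast_zmod_eq_zero_iff_dvd]
  have h7 : sexp σ p x - sexp σ p y = -(sexp σ p y + -sexp σ p x) := by ring
  rw [h7]
  exact Dvd.dvd.neg_right h6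

lemma orbit_card (hd : 0 < d) (hc : Commute p σ)
    (hσ : ∀ (x : α) (m : ℤ), (σ ^ m) x = x ↔ (d : ℤ) ∣ m) (x : α) :
    #(Finset.univ.filter fun y => OrbRel σ p x y) = d * cexp σ p x := by
  have hc0 : 0 < cexp σ p x := cexp_pos σ p x
  rw [show d * cexp σ p x = #((Finset.range d) ×ˢ (Finset.range (cexp σ p x))) by
    rw [Finset.card_product, Finset.card_range, Finset.card_range]]
  symm
  apply Finset.card_bij (i := fun (w : ℕ × ℕ) _ => (σ ^ (w.1 : ℤ) * p ^ (w.2 : ℤ)) x)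
  · intro w _
    rw [Finset.mem_filter]
    exact ⟨Finset.mem_univ _, ⟨(w.1 : ℤ), (w.2 : ℤ), rfl⟩⟩
  · intro w1 hw1 w2 hw2 heq
    rw [Finset.mem_product, Finset.mem_range, Finset.mem_range] at hw1 hw2
    have hst := st_of_eq hc heq
    have hdvdc := st_dvd_c hc hst
    have hj : (-(w2.2 : ℤ) + (w1.2 : ℤ)) = 0 := by
      apply Int.eq_zero_of_abs_lt_dvd hdvdc
      rw [abs_lt]
      constructor <;> [omega; omega]
    have hmm : St σ p x (-(w2.1 : ℤ) + (w1.1 : ℤ)) 0 := by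
      rw [← hj]; exact hst
    have h4 : (σ ^ (-(w2.1 : ℤ) + (w1.1 : ℤ))) x = x := by
      simpa [St] using hmm
    have h5 := (hσ x _).1 h4
    have h6 : -(w2.1 : ℤ) + (w1.1 : ℤ) = 0 := by
      apply Int.eq_zero_of_abs_lt_dvd h5
      rw [abs_lt]
      constructor <;> [omega; omega]
    ext <;> omega
  · intro y hy
    rw [Finset.mem_filter] at hy
    obtain ⟨-, m, j, hmj⟩ := hy
    have hjr : (cexp σ p x : ℤ) * (j / (cexp σ p x : ℤ)) + j % (cexp σ p x : ℤ) = j :=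
      Int.mul_ediv_add_emod j (cexp σ p x)
    have hr0 : 0 ≤ j % (cexp σ p x : ℤ) := Int.emod_nonneg j (by positivity)
    have hrc : j % (cexp σ p x : ℤ) < cexp σ p x := Int.emod_lt_of_pos j (by positivity)
    have hse := st_zsmul hc (sexp_spec σ p x) (j / (cexp σ p x : ℤ))
    set s : ℤ := sexp σ p x with hsdef
    set e : ℤ := j / (cexp σ p x : ℤ) with hedef
    set r : ℤ := j % (cexp σ p x : ℤ) with hrdef
    have step1 : (σ ^ m * p ^ j) x = (σ ^ (m - s * e) * p ^ r) x := by
      apply eq_of_st hc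
      rw [show -(m - s * e) + m = s * e by ring, show -r + j = (cexp σ p x : ℤ) * e by omega]
      exact hse
    set m₁ : ℤ := m - s * e with hm₁def
    have hu0 : 0 ≤ m₁ % (d : ℤ) := Int.emod_nonneg m₁ (by positivity)
    have hud : m₁ % (d : ℤ) < d := Int.emod_lt_of_pos m₁ (by positivity)
    set u : ℤ := m₁ % (d : ℤ) with hudef
    have step2 : (σ ^ m₁ * p ^ r) x = (σ ^ u * p ^ r) x := by
      apply eq_of_st hc
      rw [show -u + m₁ = m₁ - u by ring, show -r + r = 0 by ring]
      show (σ ^ (m₁ - u) * p ^ (0 : ℤ)) x = x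
      have h9 : (σ ^ (m₁ - u)) x = x := by
        rw [hσ]
        refine ⟨m₁ / (d : ℤ), ?_⟩
        have h10 : (d : ℤ) * (m₁ / (d : ℤ)) + m₁ % (d : ℤ) = m₁ := Int.mul_ediv_add_emod m₁ d
        omega
      simpa using h9
    refine ⟨(u.toNat, r.toNat), ?_, ?_⟩
    · rw [Finset.mem_product, Finset.mem_range, Finset.mem_range]
      constructor <;> omega
    · show (σ ^ ((u.toNat : ℕ) : ℤ) * p ^ ((r.toNat : ℕ) : ℤ)) x = y
      rw [Int.toNat_of_nonneg hu0, Int.toNat_of_nonneg hr0]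
      rw [← step2, ← step1, hmj]

end Orbits

section MainExists
open scoped Classical

variable {d : ℕ} {σ p q : Perm α}

/-- The invariant as a function on orbits. -/
noncomputable def orbInv (d : ℕ) (σ p : Perm α) (hc : Commute p σ)
    (hσ : ∀ (x : α) (m : ℤ), (σ ^ m) x = x ↔ (d : ℤ) ∣ m) :
    Quotient (orbSetoid σ p hc) → ℕ × ZMod d :=
  Quotient.lift (invf d σ p) (fun _ _ hxy => invf_eq_of_orbRel hc hσ hxy)

lemma orbInv_mk (hc : Commute p σ) (hσ : ∀ (x : α) (m : ℤ), (σ ^ m) x = x ↔ (d : ℤ) ∣ m)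
    (x : α) : orbInv d σ p hc hσ (Quotient.mk (orbSetoid σ p hc) x) = invf d σ p x := rfl

lemma orbInv_out (hc : Commute p σ) (hσ : ∀ (x : α) (m : ℤ), (σ ^ m) x = x ↔ (d : ℤ) ∣ m)
    (o : Quotient (orbSetoid σ p hc)) : invf d σ p o.out = orbInv d σ p hc hσ o := by
  conv_rhs => rw [← Quotient.out_eq o]
  rfl

lemma coord_exists (σ p : Perm α) (hc : Commute p σ) (x : α) :
    ∃ mj : ℤ × ℤ, (σ ^ mj.1 * p ^ mj.2) ((Quotient.mk (orbSetoid σ p hc) x).out) = x := by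
  have h : OrbRel σ p ((Quotient.mk (orbSetoid σ p hc) x).out) x :=
    Quotient.exact (Quotient.out_eq (Quotient.mk (orbSetoid σ p hc) x))
  obtain ⟨m, j, hmj⟩ := h
  exact ⟨(m, j), hmj⟩

/-- A choice of coordinates for `x` relative to the representative of its orbit. -/
noncomputable def coord (σ p : Perm α) (hc : Commute p σ) (x : α) : ℤ × ℤ :=
  Classical.choose (coord_exists σ p hc x)

lemma coord_spec (σ p : Perm α) (hc : Commute p σ) (x : α) :
    (σ ^ (coord σ p hc x).1 * p ^ (coord σ p hc x).2)
      ((Quotient.mk (orbSetoid σ p hc) x).out) = x :=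
  Classical.choose_spec (coord_exists σ p hc x)

lemma main_exists (hd : 0 < d) (σ p q : Perm α)
    (hσ : ∀ (x : α) (m : ℤ), (σ ^ m) x = x ↔ (d : ℤ) ∣ m)
    (hp : Commute p σ) (hq : Commute q σ)
    (hfix : ∀ m j : ℤ,
      #(Finset.univ.filter fun x => (σ ^ m * p ^ j) x = x) =
      #(Finset.univ.filter fun x => (σ ^ m * q ^ j) x = x)) :
    ∃ ρ : Perm α, ρ * σ * ρ⁻¹ = σ ∧ ρ * p * ρ⁻¹ = q := by
  classical
  -- orbit-level counts
  have horb : ∀ (r : Perm α) (hr : Commute r σ) (v : ℕ × ZMod d),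
      #(Finset.univ.filter fun o : Quotient (orbSetoid σ r hr) => orbInv d σ r hr hσ o = v)
        * (d * v.1) = Nv d σ r v := by
    intro r hr v
    have hmem : ∀ x ∈ (Finset.univ.filter fun x => invf d σ r x = v),
        Quotient.mk (orbSetoid σ r hr) x ∈
          (Finset.univ.filter fun o : Quotient (orbSetoid σ r hr) =>
            orbInv d σ r hr hσ o = v) := by
      intro x hx
      rw [Finset.mem_filter] at hx ⊢
      exact ⟨Finset.mem_univ _, by rw [orbInv_mk]; exact hx.2⟩
    rw [Nv, Finset.card_eq_sum_card_fiberwise hmem]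
    rw [Finset.sum_congr rfl (g := fun _ => d * v.1) ?_, Finset.sum_const, smul_eq_mul]
    intro o ho
    rw [Finset.mem_filter] at ho
    have hfeq : ((Finset.univ.filter fun x => invf d σ r x = v).filter
        (fun x => Quotient.mk (orbSetoid σ r hr) x = o)) =
        (Finset.univ.filter fun y => OrbRel σ r o.out y) := by
      rw [Finset.filter_filter]
      apply Finset.filter_congr
      intro x _
      constructor
      · rintro ⟨-, hmk⟩
        have hx : OrbRel σ r x o.out := Quotient.exact (hmk.trans (Quotient.out_eq o).symm)
        exact (orbRel_equivalence σ r hr).symm hx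
      · intro hx
        constructor
        · rw [(invf_eq_of_orbRel hr hσ hx).symm, orbInv_out hr hσ o]
          exact ho.2
        · exact (Quotient.sound ((orbRel_equivalence σ r hr).symm hx)).trans (Quotient.out_eq o)
    rw [hfeq, orbit_card hd hr hσ]
    congr 1
    have := orbInv_out hr hσ o
    rw [ho.2] at this
    exact congrArg Prod.fst this
  have hNveq := count_eq hd σ p q hp hq hσ hfix
  have horbN : ∀ v : ℕ × ZMod d,
      #(Finset.univ.filter fun o : Quotient (orbSetoid σ p hp) => orbInv d σ p hp hσ o = v) =
      #(Finset.univ.filter fun o : Quotient (orbSetoid σ q hq) => orbInv d σ q hq hσ o = v) := by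
    intro v
    rcases Nat.eq_zero_or_pos v.1 with h0 | hpos
    · have hzp : ∀ (r : Perm α) (hr : Commute r σ),
          #(Finset.univ.filter fun o : Quotient (orbSetoid σ r hr) =>
            orbInv d σ r hr hσ o = v) = 0 := by
        intro r hr
        rw [Finset.card_eq_zero, Finset.filter_eq_empty_iff]
        intro o _ hv
        have h1 := orbInv_out hr hσ o
        rw [hv] at h1
        have h2 : cexp σ r o.out = v.1 := congrArg Prod.fst h1
        rw [h0] at h2
        exact (cexp_pos σ r o.out).ne' h2
      rw [hzp p hp, hzp q hq]
    · have h1 := horb p hp v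
      have h2 := horb q hq v
      rw [hNveq v] at h1
      exact Nat.eq_of_mul_eq_mul_right (Nat.mul_pos hd hpos) (h1.trans h2.symm)
  have hcardv : ∀ v : ℕ × ZMod d,
      Fintype.card {o : Quotient (orbSetoid σ p hp) // orbInv d σ p hp hσ o = v} =
      Fintype.card {o : Quotient (orbSetoid σ q hq) // orbInv d σ q hq hσ o = v} := by
    intro v
    rw [Fintype.card_subtype, Fintype.card_subtype]
    exact horbN v
  let E : ∀ v : ℕ × ZMod d, {o : Quotient (orbSetoid σ p hp) // orbInv d σ p hp hσ o = v} ≃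
      {o : Quotient (orbSetoid σ q hq) // orbInv d σ q hq hσ o = v} :=
    fun v => Fintype.equivOfCardEq (hcardv v)
  let γ : Quotient (orbSetoid σ p hp) ≃ Quotient (orbSetoid σ q hq) :=
    ((Equiv.sigmaFiberEquiv (orbInv d σ p hp hσ)).symm.trans
      (Equiv.sigmaCongrRight E)).trans (Equiv.sigmaFiberEquiv (orbInv d σ q hq hσ))
  have hγ : ∀ o, orbInv d σ q hq hσ (γ o) = orbInv d σ p hp hσ o := by
    intro o
    have h1 : γ o = (E (orbInv d σ p hp hσ o) ⟨o, rfl⟩).1 := rfl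
    rw [h1]
    exact (E _ ⟨o, rfl⟩).2
  have hrep : ∀ o : Quotient (orbSetoid σ p hp),
      invf d σ p o.out = invf d σ q ((γ o).out) := by
    intro o
    rw [orbInv_out hp hσ o, orbInv_out hq hσ (γ o), hγ]
  have htpq : ∀ (o : Quotient (orbSetoid σ p hp)) {m j m' j' : ℤ},
      (σ ^ m * p ^ j) o.out = (σ ^ m' * p ^ j') o.out →
      (σ ^ m * q ^ j) ((γ o).out) = (σ ^ m' * q ^ j') ((γ o).out) :=
    fun o _ _ _ _ h => eq_transfer hd hp hq hσ (hrep o) h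
  have htqp : ∀ (o' : Quotient (orbSetoid σ q hq)) {m j m' j' : ℤ},
      (σ ^ m * q ^ j) o'.out = (σ ^ m' * q ^ j') o'.out →
      (σ ^ m * p ^ j) ((γ.symm o').out) = (σ ^ m' * p ^ j') ((γ.symm o').out) := by
    intro o' m j m' j' h
    have hr : invf d σ q o'.out = invf d σ p ((γ.symm o').out) := by
      have h2 := hrep (γ.symm o')
      rw [Equiv.apply_symm_apply] at h2
      exact h2.symm
    exact eq_transfer hd hq hp hσ hr h
  -- the conjugating map
  set f : α → α := fun x =>
    (σ ^ (coord σ p hp x).1 * q ^ (coord σ p hp x).2)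
      ((γ (Quotient.mk (orbSetoid σ p hp) x)).out) with hfdef
  set g : α → α := fun y =>
    (σ ^ (coord σ q hq y).1 * p ^ (coord σ q hq y).2)
      ((γ.symm (Quotient.mk (orbSetoid σ q hq) y)).out) with hgdef
  have hfx : ∀ x, f x = (σ ^ (coord σ p hp x).1 * q ^ (coord σ p hp x).2)
      ((γ (Quotient.mk (orbSetoid σ p hp) x)).out) := fun _ => rfl
  have hgy : ∀ y, g y = (σ ^ (coord σ q hq y).1 * p ^ (coord σ q hq y).2)
      ((γ.symm (Quotient.mk (orbSetoid σ q hq) y)).out) := fun _ => rfl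
  have hmkf : ∀ x, Quotient.mk (orbSetoid σ q hq) (f x) =
      γ (Quotient.mk (orbSetoid σ p hp) x) := by
    intro x
    have h1 : OrbRel σ q ((γ (Quotient.mk (orbSetoid σ p hp) x)).out) (f x) :=
      ⟨(coord σ p hp x).1, (coord σ p hp x).2, (hfx x).symm⟩
    exact (Quotient.sound ((orbRel_equivalence σ q hq).symm h1)).trans (Quotient.out_eq _)
  have hmkg : ∀ y, Quotient.mk (orbSetoid σ p hp) (g y) =
      γ.symm (Quotient.mk (orbSetoid σ q hq) y) := by
    intro y
    have h1 : OrbRel σ p ((γ.symm (Quotient.mk (orbSetoid σ q hq) y)).out) (g y) :=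
      ⟨(coord σ q hq y).1, (coord σ q hq y).2, (hgy y).symm⟩
    exact (Quotient.sound ((orbRel_equivalence σ p hp).symm h1)).trans (Quotient.out_eq _)
  have hgf : ∀ x, g (f x) = x := by
    intro x
    have hcs := coord_spec σ q hq (f x)
    rw [hmkf x] at hcs
    have heqq : (σ ^ (coord σ q hq (f x)).1 * q ^ (coord σ q hq (f x)).2)
        ((γ (Quotient.mk (orbSetoid σ p hp) x)).out) =
        (σ ^ (coord σ p hp x).1 * q ^ (coord σ p hp x).2)
        ((γ (Quotient.mk (orbSetoid σ p hp) x)).out) := hcs.trans (hfx x)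
    have h2 := htqp (γ (Quotient.mk (orbSetoid σ p hp) x)) heqq
    rw [Equiv.symm_apply_apply] at h2
    rw [hgy (f x), hmkf x, Equiv.symm_apply_apply, h2, coord_spec σ p hp x]
  have hfg : ∀ y, f (g y) = y := by
    intro y
    have hcs := coord_spec σ p hp (g y)
    rw [hmkg y] at hcs
    have heqq : (σ ^ (coord σ p hp (g y)).1 * p ^ (coord σ p hp (g y)).2)
        ((γ.symm (Quotient.mk (orbSetoid σ q hq) y)).out) =
        (σ ^ (coord σ q hq y).1 * p ^ (coord σ q hq y).2)
        ((γ.symm (Quotient.mk (orbSetoid σ q hq) y)).out) := hcs.trans (hgy y)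
    have h2 := htpq (γ.symm (Quotient.mk (orbSetoid σ q hq) y)) heqq
    rw [Equiv.apply_symm_apply] at h2
    rw [hfx (g y), hmkg y, Equiv.apply_symm_apply, h2, coord_spec σ q hq y]
  have hcomp : ∀ (r : Perm α) (hr : Commute r σ) (x : α) (m j a b : ℤ),
      (σ ^ m * r ^ j) ((σ ^ a * r ^ b) x) = (σ ^ (m + a) * r ^ (j + b)) x := by
    intro r hr x m j a b
    rw [← Equiv.Perm.mul_apply, st_mul_pow hr]
  have hfσ : ∀ x, f (σ x) = σ (f x) := by
    intro x
    have hmkσ : Quotient.mk (orbSetoid σ p hp) (σ x) = Quotient.mk (orbSetoid σ p hp) x := by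
      apply Quotient.sound
      apply (orbRel_equivalence σ p hp).symm
      exact ⟨1, 0, by simp⟩
    have hcs := coord_spec σ p hp (σ x)
    rw [hmkσ] at hcs
    have hxx : σ x = (σ ^ ((1 : ℤ) + (coord σ p hp x).1) * p ^ ((0 : ℤ) + (coord σ p hp x).2))
        ((Quotient.mk (orbSetoid σ p hp) x).out) := by
      rw [← hcomp p hp _ 1 0 _ _, coord_spec σ p hp x]
      simp
    have heqq := hcs.trans hxx
    have h2 := htpq (Quotient.mk (orbSetoid σ p hp) x) heqq
    rw [hfx (σ x), hmkσ, h2, ← hcomp q hq _ 1 0 _ _, ← hfx x]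
    simp
  have hfp : ∀ x, f (p x) = q (f x) := by
    intro x
    have hmkp : Quotient.mk (orbSetoid σ p hp) (p x) = Quotient.mk (orbSetoid σ p hp) x := by
      apply Quotient.sound
      apply (orbRel_equivalence σ p hp).symm
      exact ⟨0, 1, by simp⟩
    have hcs := coord_spec σ p hp (p x)
    rw [hmkp] at hcs
    have hxx : p x = (σ ^ ((0 : ℤ) + (coord σ p hp x).1) * p ^ ((1 : ℤ) + (coord σ p hp x).2))
        ((Quotient.mk (orbSetoid σ p hp) x).out) := by
      rw [← hcomp p hp _ 0 1 _ _, coord_spec σ p hp x]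
      simp
    have heqq := hcs.trans hxx
    have h2 := htpq (Quotient.mk (orbSetoid σ p hp) x) heqq
    rw [hfx (p x), hmkp, h2, ← hcomp q hq _ 0 1 _ _, ← hfx x]
    simp
  refine ⟨⟨f, g, hgf, hfg⟩, ?_, ?_⟩
  · ext z
    have h1 : (⟨f, g, hgf, hfg⟩ : Perm α)⁻¹ z = g z := rfl
    simp only [Equiv.Perm.mul_apply, h1]
    show f (σ (g z)) = σ z
    rw [hfσ (g z)]
    show σ (f (g z)) = σ z
    rw [hfg z]
  · ext z
    have h1 : (⟨f, g, hgf, hfg⟩ : Perm α)⁻¹ z = g z := rfl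
    simp only [Equiv.Perm.mul_apply, h1]
    show f (p (g z)) = q z
    rw [hfp (g z)]
    show q (f (g z)) = q z
    rw [hfg z]

end MainExists


section Transfer

variable {α : Type*} [Fintype α] [DecidableEq α]

lemma card_fixed_of_isConj {u v : Perm α} (h : IsConj u v) :
    #(Finset.univ.filter fun x => u x = x) = #(Finset.univ.filter fun x => v x = x) := by
  obtain ⟨c, hc⟩ := isConj_iff.1 h
  subst hc
  apply Finset.card_bij (i := fun x _ => c x)
  · intro x hx
    rw [Finset.mem_filter] at hx ⊢
    refine ⟨Finset.mem_univ _, ?_⟩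
    simp only [Equiv.Perm.mul_apply, Equiv.Perm.inv_apply_self, hx.2]
  · intro x1 _ x2 _ he
    exact c.injective he
  · intro y hy
    rw [Finset.mem_filter] at hy
    refine ⟨c⁻¹ y, ?_, ?_⟩
    · rw [Finset.mem_filter]
      refine ⟨Finset.mem_univ _, ?_⟩
      have h2 := hy.2
      simp only [Equiv.Perm.mul_apply] at h2
      have h3 : c (u (c⁻¹ y)) = c (c⁻¹ y) := by
        rw [h2, Equiv.Perm.apply_inv_self]
      exact c.injective h3
    · exact Equiv.Perm.apply_inv_self c y

lemma isConj_zpow {G : Type*} [Group G] {u v : G} (h : IsConj u v) (j : ℤ) :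
    IsConj (u ^ j) (v ^ j) := by
  obtain ⟨c, hc⟩ := isConj_iff.1 h
  exact isConj_iff.2 ⟨c, by rw [← conj_zpow, hc]⟩

/-- Restriction of a permutation preserving a finset to a permutation supported there. -/
def restrPerm (S : Finset α) (u : Perm α) (h : ∀ a, a ∈ S ↔ u a ∈ S) : Perm α :=
  Equiv.Perm.ofSubtype (u.subtypePerm (fun a => (h a).symm))

lemma restrPerm_apply_mem {S : Finset α} {u : Perm α} {h : ∀ a, a ∈ S ↔ u a ∈ S}
    {a : α} (ha : a ∈ S) : restrPerm S u h a = u a := by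
  rw [restrPerm, Equiv.Perm.ofSubtype_apply_of_mem _ ha, Equiv.Perm.subtypePerm_apply]

lemma restrPerm_apply_not_mem {S : Finset α} {u : Perm α} {h : ∀ a, a ∈ S ↔ u a ∈ S}
    {a : α} (ha : a ∉ S) : restrPerm S u h a = a :=
  Equiv.Perm.ofSubtype_apply_of_not_mem _ ha

lemma restrPerm_support {S : Finset α} {u : Perm α} {h : ∀ a, a ∈ S ↔ u a ∈ S} :
    (restrPerm S u h).support ⊆ S := by
  intro a ha
  rw [Equiv.Perm.mem_support] at ha
  by_contra hc
  exact ha (restrPerm_apply_not_mem hc)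

/-- The main per-component conjugating lemma. -/
lemma exists_conj_of_cent0 (S : Finset α) (d : ℕ) (hd : 0 < d) (σ' p q : Perm α)
    (hσS : σ'.support ⊆ S)
    (hper : ∀ a ∈ S, ∀ m : ℤ, ((σ' ^ m) a = a ↔ (d : ℤ) ∣ m))
    (hpc : Commute p σ') (hqc : Commute q σ')
    (hps : p.support ⊆ S) (hqs : q.support ⊆ S)
    (hconj : ∀ m j : ℤ, IsConj (σ' ^ m * p ^ j) (σ' ^ m * q ^ j)) :
    ∃ ρ : Perm α, ρ.support ⊆ S ∧ ρ * σ' * ρ⁻¹ = σ' ∧ ρ * p * ρ⁻¹ = q := by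
  classical
  have hiff : ∀ u : Perm α, u.support ⊆ S → ∀ a, a ∈ S ↔ u a ∈ S := by
    intro u hu a
    constructor
    · intro ha; exact apply_mem_of_support_subset hu ha
    · intro ha
      by_contra hc
      rw [Equiv.Perm.notMem_support.1 (fun hs => hc (hu hs))] at ha
      exact hc ha
  set σh : Perm {a // a ∈ S} := σ'.subtypePerm (fun a => (hiff σ' hσS a).symm) with hσh
  set ph : Perm {a // a ∈ S} := p.subtypePerm (fun a => (hiff p hps a).symm) with hph
  set qh : Perm {a // a ∈ S} := q.subtypePerm (fun a => (hiff q hqs a).symm) with hqh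
  -- pointwise evaluation of products of zpowers of subtype perms
  have heval : ∀ (u w : Perm α) (hu : ∀ a, a ∈ S ↔ u a ∈ S) (hw : ∀ a, a ∈ S ↔ w a ∈ S)
      (m j : ℤ) (z : {a // a ∈ S}),
      (((u.subtypePerm (fun a => (hu a).symm)) ^ m * (w.subtypePerm (fun a => (hw a).symm)) ^ j) z : {a // a ∈ S}).val =
        (u ^ m * w ^ j) z.val := by
    intro u w hu hw m j z
    rw [Equiv.Perm.subtypePerm_zpow, Equiv.Perm.subtypePerm_zpow]
    rfl
  have hperh : ∀ (z : {a // a ∈ S}) (m : ℤ), (σh ^ m) z = z ↔ (d : ℤ) ∣ m := by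
    intro z m
    rw [hσh, Equiv.Perm.subtypePerm_zpow]
    rw [Subtype.ext_iff, Equiv.Perm.subtypePerm_apply]
    exact hper z.val z.2 m
  have hcommh : ∀ (u : Perm α) (hu : ∀ a, a ∈ S ↔ u a ∈ S), Commute u σ' →
      Commute (u.subtypePerm (fun a => (hu a).symm)) σh := by
    intro u hu hcu
    ext z
    have h1 : (u * σ') z.val = (σ' * u) z.val := by rw [hcu.eq]
    simp only [Equiv.Perm.mul_apply] at h1
    simp only [Equiv.Perm.mul_apply, hσh, Equiv.Perm.subtypePerm_apply]
    exact h1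
  -- counts transfer
  have hcount : ∀ (u : Perm α), u.support ⊆ S →
      #(Finset.univ.filter fun x : α => u x = x) =
        #(Finset.univ.filter fun z : {a // a ∈ S} => u z.val = z.val) + #(Sᶜ) := by
    intro u hu
    have hsplit : (Finset.univ.filter fun x : α => u x = x) =
        (S.filter fun x => u x = x) ∪ Sᶜ := by
      ext x
      simp only [Finset.mem_filter, Finset.mem_univ, true_and, Finset.mem_union,
        Finset.mem_compl]
      constructor
      · intro hx
        by_cases hxs : x ∈ S
        · exact Or.inl ⟨hxs, hx⟩
        · exact Or.inr hxs
      · intro hx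
        rcases hx with ⟨-, hx⟩ | hx
        · exact hx
        · exact Equiv.Perm.notMem_support.1 (fun hs => hx (hu hs))
    have hdisj : Disjoint (S.filter fun x => u x = x) (Sᶜ) := by
      rw [Finset.disjoint_left]
      intro x hx1 hx2
      rw [Finset.mem_filter] at hx1
      rw [Finset.mem_compl] at hx2
      exact hx2 hx1.1
    rw [hsplit, Finset.card_union_of_disjoint hdisj]
    congr 1
    symm
    apply Finset.card_bij (i := fun (z : {a // a ∈ S}) _ => z.val)
    · intro z hz
      rw [Finset.mem_filter] at hz ⊢
      exact ⟨z.2, hz.2⟩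
    · intro z1 _ z2 _ he
      exact Subtype.ext he
    · intro x hx
      rw [Finset.mem_filter] at hx
      refine ⟨⟨x, hx.1⟩, ?_, rfl⟩
      rw [Finset.mem_filter]
      exact ⟨Finset.mem_univ _, hx.2⟩
  have hfixh : ∀ m j : ℤ,
      #(Finset.univ.filter fun z : {a // a ∈ S} => (σh ^ m * ph ^ j) z = z) =
      #(Finset.univ.filter fun z : {a // a ∈ S} => (σh ^ m * qh ^ j) z = z) := by
    intro m j
    have he1 : ∀ z : {a // a ∈ S}, ((σh ^ m * ph ^ j) z = z) ↔ ((σ' ^ m * p ^ j) z.val = z.val) := by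
      intro z
      rw [Subtype.ext_iff, hσh, hph, heval σ' p (hiff σ' hσS) (hiff p hps)]
    have he2 : ∀ z : {a // a ∈ S}, ((σh ^ m * qh ^ j) z = z) ↔ ((σ' ^ m * q ^ j) z.val = z.val) := by
      intro z
      rw [Subtype.ext_iff, hσh, hqh, heval σ' q (hiff σ' hσS) (hiff q hqs)]
    have hsup1 : (σ' ^ m * p ^ j).support ⊆ S :=
      (Equiv.Perm.support_mul_le _ _).trans (sup_le
        ((Equiv.Perm.support_zpow_le σ' m).trans hσS)
        ((Equiv.Perm.support_zpow_le p j).trans hps))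
    have hsup2 : (σ' ^ m * q ^ j).support ⊆ S :=
      (Equiv.Perm.support_mul_le _ _).trans (sup_le
        ((Equiv.Perm.support_zpow_le σ' m).trans hσS)
        ((Equiv.Perm.support_zpow_le q j).trans hqs))
    have hc1 := hcount _ hsup1
    have hc2 := hcount _ hsup2
    have hcj := card_fixed_of_isConj (hconj m j)
    rw [Finset.filter_congr (fun z _ => he1 z), Finset.filter_congr (fun z _ => he2 z)]
    omega
  obtain ⟨ρh, hρ1, hρ2⟩ := main_exists hd σh ph qh hperh
    (hcommh p (hiff p hps) hpc) (hcommh q (hiff q hqs) hqc) hfixh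
  refine ⟨Equiv.Perm.ofSubtype ρh, ?_, ?_, ?_⟩
  · intro x hx
    rw [Equiv.Perm.mem_support] at hx
    by_contra hc
    exact hx (Equiv.Perm.ofSubtype_apply_of_not_mem _ hc)
  · have := congrArg Equiv.Perm.ofSubtype hρ1
    rw [map_mul, map_mul, map_inv] at this
    rwa [Equiv.Perm.ofSubtype_subtypePerm _ (fun x hx => hσS (Equiv.Perm.mem_support.2 hx))]
      at this
  · have := congrArg Equiv.Perm.ofSubtype hρ2
    rw [map_mul, map_mul, map_inv] at this
    rwa [Equiv.Perm.ofSubtype_subtypePerm _ (fun x hx => hps (Equiv.Perm.mem_support.2 hx)),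
      Equiv.Perm.ofSubtype_subtypePerm _ (fun x hx => hqs (Equiv.Perm.mem_support.2 hx))]
      at this

end Transfer


end LG

open LG

/-- local-global for abelian source.
`A` is an abelian group generated by `a, b` and `φ, ψ : A → S_n` satisfy
`φ(a) = ψ(a) = σ = σ₁⋯σ_l` (each `σᵢ` a product of `kᵢ` pairwise disjoint
`dᵢ`-cycles, the `dᵢ` pairwise distinct).  Then `φ` and `ψ` are conjugate iff for
every `g ∈ A` the components of `φ(g)` and `ψ(g)` in the direct product
`S_{Fix(σ)} × Cent₀(σ₁) × ⋯ × Cent₀(σ_l)` are conjugate in `S_n`, i.e. `φ, ψ` are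
element-conjugate on restriction to `S_{Fix(σ)}` and to each `Cent₀(σᵢ)`. -/
theorem abelian_homomorphism_conjugacy_local_global
    {A : Type*} [CommGroup A] (a b : A)
    (hgen : Subgroup.closure ({a, b} : Set A) = ⊤)
    {n l : ℕ} (φ ψ : A →* Equiv.Perm (Fin n))
    (σ : Equiv.Perm (Fin n)) (σs : Fin l → Equiv.Perm (Fin n))
    (k d : Fin l → ℕ) (hd : Function.Injective d)
    (hcycles : ∀ i, ∃ τ : Fin (k i) → Equiv.Perm (Fin n),
      (∀ j, (τ j).IsCycle) ∧ (∀ j, (τ j).support.card = d i) ∧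
      (∀ j j', j ≠ j' → Equiv.Perm.Disjoint (τ j) (τ j')) ∧
      σs i = (List.ofFn τ).prod)
    (hdisjσ : ∀ i i', i ≠ i' → Equiv.Perm.Disjoint (σs i) (σs i'))
    (hσ : σ = (List.ofFn σs).prod)
    (ha : φ a = σ) (ha' : ψ a = σ) :
    (∃ ρ : Equiv.Perm (Fin n), ∀ g : A, ρ * φ g * ρ⁻¹ = ψ g) ↔
      (∀ g : A, ∃ (p₀ q₀ : Equiv.Perm (Fin n)) (p q : Fin l → Equiv.Perm (Fin n)),
        p₀.support ⊆ σ.supportᶜ ∧ q₀.support ⊆ σ.supportᶜ ∧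
        (∀ i, p i ∈ Cent0 (σs i)) ∧ (∀ i, q i ∈ Cent0 (σs i)) ∧
        φ g = p₀ * (List.ofFn p).prod ∧ ψ g = q₀ * (List.ofFn q).prod ∧
        IsConj p₀ q₀ ∧ ∀ i, IsConj (p i) (q i)) := by
  classical
  set S : Fin l → Finset (Fin n) := fun i => (σs i).support with hSdef
  have hSdisj : ∀ i j, i ≠ j → Disjoint (S i) (S j) := fun i j hij =>
    Equiv.Perm.disjoint_iff_disjoint_support.1 (hdisjσ i j hij)
  have hlist : (List.ofFn σs).Pairwise Equiv.Perm.Disjoint :=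
    List.pairwise_ofFn.2 (fun i j hij => hdisjσ i j (ne_of_lt hij))
  have hTmem : ∀ x, x ∈ σ.support ↔ ∃ i, x ∈ S i := by
    intro x
    constructor
    · intro hx
      rw [hσ] at hx
      obtain ⟨f, hf, hxf⟩ := Equiv.Perm.exists_mem_support_of_mem_support_prod hx
      obtain ⟨i, rfl⟩ := (List.mem_ofFn.1 hf)
      exact ⟨i, hxf⟩
    · rintro ⟨i, hi⟩
      rw [hσ]
      exact Equiv.Perm.support_le_prod_of_mem
        (List.mem_ofFn.2 ⟨i, rfl⟩) hlist hi
  have hTset : σ.support = Finset.univ.biUnion S := by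
    ext x
    rw [hTmem x, Finset.mem_biUnion]
    simp
  have hσParts : IsParts S 1 σs := ⟨by simp, fun i => subset_rfl⟩
  have hσeq : σ = 1 * (List.ofFn σs).prod := by rw [one_mul, hσ]
  have hagree : ∀ i, ∀ c ∈ S i, σ c = σs i c := by
    intro i c hc
    rw [hσ]
    exact ofFn_prod_apply_of_mem (fun i => subset_rfl) hSdisj hc
  have hσzpow : ∀ i, ∀ c ∈ S i, ∀ m : ℤ, (σ ^ m) c = ((σs i) ^ m) c := by
    intro i c hc m
    rw [hσeq, parts_zpow hSdisj hσParts m,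
      parts_apply_of_mem hSdisj (isParts_zpow hσParts m) hc]
  -- exact period on each block, for σs i itself
  have hperσs : ∀ i, ∀ c ∈ S i, ∀ m : ℤ, (((σs i) ^ m) c = c ↔ ((d i : ℕ) : ℤ) ∣ m) := by
    intro i c hc m
    obtain ⟨τ, hτcyc, hτcard, hτdisj, hτprod⟩ := hcycles i
    have hτS : ∀ j, (τ j).support ⊆ (fun j => (τ j).support) j := fun j => subset_rfl
    have hτSdisj : ∀ j j', j ≠ j' → Disjoint ((fun j => (τ j).support) j)
        ((fun j => (τ j).support) j') := fun j j' hjj =>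
      Equiv.Perm.disjoint_iff_disjoint_support.1 (hτdisj j j' hjj)
    have hc' : c ∈ (σs i).support := hc
    rw [hτprod] at hc'
    obtain ⟨f, hf, hcf⟩ := Equiv.Perm.exists_mem_support_of_mem_support_prod hc'
    obtain ⟨j, rfl⟩ := (List.mem_ofFn.1 hf)
    have heval : ((σs i) ^ m) c = ((τ j) ^ m) c := by
      rw [hτprod, show (List.ofFn τ).prod = 1 * (List.ofFn τ).prod from (one_mul _).symm,
        parts_zpow hτSdisj ⟨by simp, hτS⟩ m,
        parts_apply_of_mem hτSdisj (isParts_zpow ⟨by simp, hτS⟩ m) hcf]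
    rw [heval, ← hτcard j]
    have hcyc : (τ j).IsCycleOn ((τ j).support : Set (Fin n)) := by
      have h1 := (hτcyc j).isCycleOn
      rwa [show ({x | τ j x ≠ x} : Set (Fin n)) = ((τ j).support : Set (Fin n)) by
        ext z; simp [Equiv.Perm.mem_support]] at h1
    exact hcyc.zpow_apply_eq (by exact hcf)
  have hper : ∀ i, ∀ c ∈ S i, ∀ m : ℤ, ((σ ^ m) c = c ↔ ((d i : ℕ) : ℤ) ∣ m) := by
    intro i c hc m
    rw [hσzpow i c hc m]
    exact hperσs i c hc m
  -- invariance of blocks under the centralizer of σ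
  have hINV : ∀ u : Equiv.Perm (Fin n), Commute u σ → ∀ i, ∀ c ∈ S i, u c ∈ S i := by
    intro u hu i c hc
    have hpt : ∀ m : ℤ, (σ ^ m) (u c) = u ((σ ^ m) c) := by
      intro m
      have h1 : u * σ ^ m = σ ^ m * u := hu.zpow_right m
      calc (σ ^ m) (u c) = (σ ^ m * u) c := rfl
        _ = (u * σ ^ m) c := by rw [h1]
        _ = u ((σ ^ m) c) := rfl
    have hiffm : ∀ m : ℤ, ((σ ^ m) (u c) = u c ↔ ((d i : ℕ) : ℤ) ∣ m) := by
      intro m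
      rw [hpt m, u.apply_eq_iff_eq]
      exact hper i c hc m
    have hcT : c ∈ σ.support := (hTmem c).2 ⟨i, hc⟩
    have huT : u c ∈ σ.support := by
      rw [Equiv.Perm.mem_support]
      have h2 : σ (u c) = u (σ c) := by
        have := hpt 1
        simpa using this
      rw [h2]
      intro hcon
      exact (Equiv.Perm.mem_support.1 hcT) (u.injective hcon)
    obtain ⟨i', hi'⟩ := (hTmem (u c)).1 huT
    have hdd : d i' = d i := by
      have h1 : ((d i : ℕ) : ℤ) ∣ ((d i' : ℕ) : ℤ) := by
        rw [← hiffm (d i'), hper i' (u c) hi' (d i')]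
      have h2 : ((d i' : ℕ) : ℤ) ∣ ((d i : ℕ) : ℤ) := by
        rw [← hper i' (u c) hi' (d i), hiffm (d i)]
      exact Nat.dvd_antisymm (Int.natCast_dvd_natCast.1 h2) (Int.natCast_dvd_natCast.1 h1)
    rwa [hd hdd] at hi'
  have hiffS : ∀ (u : Equiv.Perm (Fin n)), Commute u σ → ∀ i, ∀ c, c ∈ S i ↔ u c ∈ S i := by
    intro u hu i c
    constructor
    · exact hINV u hu i c
    · intro hc
      have := hINV u⁻¹ hu.inv_left i (u c) hc
      simpa using this
  have hiffT : ∀ (u : Equiv.Perm (Fin n)), Commute u σ →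
      ∀ c, c ∈ σ.supportᶜ ↔ u c ∈ σ.supportᶜ := by
    intro u hu c
    rw [Finset.mem_compl, Finset.mem_compl, hTmem, hTmem]
    constructor
    · intro h1 ⟨i, hi⟩
      exact h1 ⟨i, (hiffS u hu i c).2 hi⟩
    · intro h1 ⟨i, hi⟩
      exact h1 ⟨i, (hiffS u hu i c).1 hi⟩
  constructor
  · -- forward direction
    rintro ⟨ρ, hρ⟩ g
    have hρσ : Commute ρ σ := by
      have h1 := hρ a
      rw [ha, ha'] at h1
      exact mul_inv_eq_iff_eq_mul.1 h1
    have hxσ : Commute (φ g) σ := by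
      rw [← ha]
      rw [Commute, SemiconjBy, ← map_mul, ← map_mul, mul_comm]
    have hyσ : Commute (ψ g) σ := by
      rw [← ha']
      rw [Commute, SemiconjBy, ← map_mul, ← map_mul, mul_comm]
    refine ⟨restrPerm σ.supportᶜ (φ g) (hiffT _ hxσ), restrPerm σ.supportᶜ (ψ g) (hiffT _ hyσ),
      fun i => restrPerm (S i) (φ g) (hiffS _ hxσ i),
      fun i => restrPerm (S i) (ψ g) (hiffS _ hyσ i),
      restrPerm_support, restrPerm_support, ?_, ?_, ?_, ?_, ?_, ?_⟩
    · -- membership in Cent0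
      intro i
      refine ⟨?_, restrPerm_support⟩
      ext c
      by_cases hc : c ∈ S i
      · have h1 : σs i c ∈ S i := apply_mem_of_support_subset subset_rfl hc
        simp only [Equiv.Perm.mul_apply]
        rw [restrPerm_apply_mem h1, restrPerm_apply_mem hc, ← hagree i c hc,
          ← hagree i (φ g c) (hINV _ hxσ i c hc)]
        exact congrArg Fin.val (calc φ g (σ c) = (φ g * σ) c := rfl
          _ = (σ * φ g) c := by rw [hxσ.eq]
          _ = σ (φ g c) := rfl)
      · have h1 : σs i c = c := Equiv.Perm.notMem_support.1 hc
        simp only [Equiv.Perm.mul_apply]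
        rw [h1, restrPerm_apply_not_mem hc, h1]
    · intro i
      refine ⟨?_, restrPerm_support⟩
      ext c
      by_cases hc : c ∈ S i
      · have h1 : σs i c ∈ S i := apply_mem_of_support_subset subset_rfl hc
        simp only [Equiv.Perm.mul_apply]
        rw [restrPerm_apply_mem h1, restrPerm_apply_mem hc, ← hagree i c hc,
          ← hagree i (ψ g c) (hINV _ hyσ i c hc)]
        exact congrArg Fin.val (calc ψ g (σ c) = (ψ g * σ) c := rfl
          _ = (σ * ψ g) c := by rw [hyσ.eq]
          _ = σ (ψ g c) := rfl)
      · have h1 : σs i c = c := Equiv.Perm.notMem_support.1 hc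
        simp only [Equiv.Perm.mul_apply]
        rw [h1, restrPerm_apply_not_mem hc, h1]
    · -- decomposition of φ g
      have hparts : IsParts S (restrPerm σ.supportᶜ (φ g) (hiffT _ hxσ))
          (fun i => restrPerm (S i) (φ g) (hiffS _ hxσ i)) :=
        ⟨by rw [← hTset]; exact restrPerm_support, fun i => restrPerm_support⟩
      ext c
      by_cases hc : ∃ i, c ∈ S i
      · obtain ⟨i, hi⟩ := hc
        rw [parts_apply_of_mem hSdisj hparts hi, restrPerm_apply_mem hi]
      · push_neg at hc
        rw [parts_apply_of_not_mem hparts hc, restrPerm_apply_mem]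
        rw [Finset.mem_compl, hTmem]
        push_neg
        exact hc
    · have hparts : IsParts S (restrPerm σ.supportᶜ (ψ g) (hiffT _ hyσ))
          (fun i => restrPerm (S i) (ψ g) (hiffS _ hyσ i)) :=
        ⟨by rw [← hTset]; exact restrPerm_support, fun i => restrPerm_support⟩
      ext c
      by_cases hc : ∃ i, c ∈ S i
      · obtain ⟨i, hi⟩ := hc
        rw [parts_apply_of_mem hSdisj hparts hi, restrPerm_apply_mem hi]
      · push_neg at hc
        rw [parts_apply_of_not_mem hparts hc, restrPerm_apply_mem]
        rw [Finset.mem_compl, hTmem]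
        push_neg
        exact hc
    · -- IsConj of the fixed parts
      apply isConj_iff.2 ⟨ρ, ?_⟩
      ext c
      by_cases hc : c ∈ σ.supportᶜ
      · have h1 : ρ⁻¹ c ∈ σ.supportᶜ := by
          rw [hiffT ρ hρσ (ρ⁻¹ c), Equiv.Perm.apply_inv_self]
          exact hc
        simp only [Equiv.Perm.mul_apply]
        rw [restrPerm_apply_mem h1, restrPerm_apply_mem hc, ← hρ g]
        simp [Equiv.Perm.mul_apply]
      · have h1 : ρ⁻¹ c ∉ σ.supportᶜ := by
          intro hcon
          exact hc (by rw [← Equiv.Perm.apply_inv_self ρ c]; exact (hiffT ρ hρσ (ρ⁻¹ c)).1 hcon)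
        simp only [Equiv.Perm.mul_apply]
        rw [restrPerm_apply_not_mem h1, Equiv.Perm.apply_inv_self, restrPerm_apply_not_mem hc]
    · intro i
      apply isConj_iff.2 ⟨ρ, ?_⟩
      ext c
      by_cases hc : c ∈ S i
      · have h1 : ρ⁻¹ c ∈ S i := by
          rw [hiffS ρ hρσ i (ρ⁻¹ c), Equiv.Perm.apply_inv_self]
          exact hc
        simp only [Equiv.Perm.mul_apply]
        rw [restrPerm_apply_mem h1, restrPerm_apply_mem hc, ← hρ g]
        simp [Equiv.Perm.mul_apply]
      · have h1 : ρ⁻¹ c ∉ S i := by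
          intro hcon
          exact hc (by rw [← Equiv.Perm.apply_inv_self ρ c]; exact (hiffS ρ hρσ i (ρ⁻¹ c)).1 hcon)
        simp only [Equiv.Perm.mul_apply]
        rw [restrPerm_apply_not_mem h1, Equiv.Perm.apply_inv_self, restrPerm_apply_not_mem hc]
  · -- reverse direction
    intro hrhs
    have habgen : ∀ g : A, ∃ m j : ℤ, g = a ^ m * b ^ j := by
      intro g
      have hg : g ∈ Subgroup.closure ({a, b} : Set A) := by rw [hgen]; exact Subgroup.mem_top g
      induction hg using Subgroup.closure_induction with
      | mem x hx =>
        rcases hx with rfl | rfl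
        · exact ⟨1, 0, by simp⟩
        · exact ⟨0, 1, by simp⟩
      | one => exact ⟨0, 0, by simp⟩
      | mul x y hx hy ihx ihy =>
        obtain ⟨m1, j1, rfl⟩ := ihx
        obtain ⟨m2, j2, rfl⟩ := ihy
        exact ⟨m1 + m2, j1 + j2, by rw [zpow_add, zpow_add]; rw [mul_mul_mul_comm]⟩
      | inv x hx ihx =>
        obtain ⟨m1, j1, rfl⟩ := ihx
        exact ⟨-m1, -j1, by rw [mul_inv, zpow_neg, zpow_neg]⟩
    obtain ⟨p₀, q₀, p, q, hp₀s, hq₀s, hpc, hqc, hφb, hψb, hcj₀, hcji⟩ := hrhs b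
    have hPp : IsParts S p₀ p := ⟨by rw [← hTset]; exact hp₀s, fun i => (hpc i).2⟩
    have hPq : IsParts S q₀ q := ⟨by rw [← hTset]; exact hq₀s, fun i => (hqc i).2⟩
    have hφdec : ∀ m j : ℤ, φ (a ^ m * b ^ j) =
        (p₀ ^ j) * (List.ofFn (fun i => (σs i) ^ m * (p i) ^ j)).prod ∧
        IsParts S (p₀ ^ j) (fun i => (σs i) ^ m * (p i) ^ j) := by
      intro m j
      have h0 : IsParts S ((1 : Equiv.Perm (Fin n)) ^ m * p₀ ^ j)
          (fun i => (σs i) ^ m * (p i) ^ j) :=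
        isParts_mul (isParts_zpow hσParts m) (isParts_zpow hPp j)
      constructor
      · rw [map_mul, map_zpow, map_zpow, ha, hφb, hσeq]
        rw [parts_zpow hSdisj hσParts m, parts_zpow hSdisj hPp j,
          parts_mul hSdisj (isParts_zpow hσParts m) (isParts_zpow hPp j)]
        rw [one_zpow, one_mul]
      · have := h0
        rwa [one_zpow, one_mul] at this
    have hψdec : ∀ m j : ℤ, ψ (a ^ m * b ^ j) =
        (q₀ ^ j) * (List.ofFn (fun i => (σs i) ^ m * (q i) ^ j)).prod ∧
        IsParts S (q₀ ^ j) (fun i => (σs i) ^ m * (q i) ^ j) := by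
      intro m j
      have h0 : IsParts S ((1 : Equiv.Perm (Fin n)) ^ m * q₀ ^ j)
          (fun i => (σs i) ^ m * (q i) ^ j) :=
        isParts_mul (isParts_zpow hσParts m) (isParts_zpow hPq j)
      constructor
      · rw [map_mul, map_zpow, map_zpow, ha', hψb, hσeq]
        rw [parts_zpow hSdisj hσParts m, parts_zpow hSdisj hPq j,
          parts_mul hSdisj (isParts_zpow hσParts m) (isParts_zpow hPq j)]
        rw [one_zpow, one_mul]
      · have := h0
        rwa [one_zpow, one_mul] at this
    have hcomp_conj : ∀ m j : ℤ, ∀ i,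
        IsConj ((σs i) ^ m * (p i) ^ j) ((σs i) ^ m * (q i) ^ j) := by
      intro m j i
      obtain ⟨u₀, v₀, u, v, hu₀s, hv₀s, huc, hvc, hφg, hψg, hcj0, hcjI⟩ := hrhs (a ^ m * b ^ j)
      have hPu : IsParts S u₀ u := ⟨by rw [← hTset]; exact hu₀s, fun i => (huc i).2⟩
      have hPv : IsParts S v₀ v := ⟨by rw [← hTset]; exact hv₀s, fun i => (hvc i).2⟩
      have h1 := parts_unique hSdisj hPu (hφdec m j).2 (hφg.symm.trans (hφdec m j).1)
      have h2 := parts_unique hSdisj hPv (hψdec m j).2 (hψg.symm.trans (hψdec m j).1)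
      have h3 := hcjI i
      rwa [h1.2 i, h2.2 i] at h3
    -- build the per-component conjugators
    have hρi : ∀ i, ∃ ρi : Equiv.Perm (Fin n), ρi.support ⊆ S i ∧
        ρi * σs i * ρi⁻¹ = σs i ∧ ρi * p i * ρi⁻¹ = q i := by
      intro i
      rcases Nat.eq_zero_or_pos (d i) with hd0 | hdpos
      ·
        obtain ⟨τ, hτcyc, hτcard, hτdisj, hτprod⟩ := hcycles i
        have hk0 : k i = 0 := by
          by_contra hk
          have j : Fin (k i) := ⟨0, Nat.pos_of_ne_zero hk⟩
          have := (hτcyc j).two_le_card_support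
          rw [hτcard j, hd0] at this
          omega
        have hσs1 : σs i = 1 := by
          rw [hτprod]
          have : (List.ofFn τ).length = 0 := by simp [hk0]
          rw [List.length_eq_zero_iff.1 this]
          rfl
        have hSempty : S i = ∅ := by
          rw [hSdef]
          simp only
          rw [hσs1, Equiv.Perm.support_one]
        have hp1 : p i = 1 := by
          rw [← Equiv.Perm.support_eq_empty_iff]
          have h := (hpc i).2
          rw [hσs1, Equiv.Perm.support_one] at h
          exact Finset.subset_empty.1 h
        have hq1 : q i = 1 := by
          rw [← Equiv.Perm.support_eq_empty_iff]
          have h := (hqc i).2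
          rw [hσs1, Equiv.Perm.support_one] at h
          exact Finset.subset_empty.1 h
        refine ⟨1, by simp [hSempty], by simp, by rw [hp1, hq1]; simp⟩
      · have h2le := hperσs i
        obtain ⟨ρi, h1, h2, h3⟩ := exists_conj_of_cent0 (S i) (d i) hdpos (σs i) (p i) (q i)
          subset_rfl (hperσs i) (hpc i).1 (hqc i).1 (hpc i).2 (hqc i).2
          (fun m j => hcomp_conj m j i)
        exact ⟨ρi, h1, h2, h3⟩
    choose ρs hρsS hρσs hρp using hρi
    have hρ0ex : ∃ ρ0 : Equiv.Perm (Fin n), ρ0.support ⊆ σ.supportᶜ ∧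
        ρ0 * p₀ * ρ0⁻¹ = q₀ := by
      obtain ⟨ρ0, h1, h2, h3⟩ := exists_conj_of_cent0 (σ.supportᶜ) 1 one_pos 1 p₀ q₀
        (by simp) (by intro c hc m; simp) (Commute.one_right _) (Commute.one_right _)
        hp₀s hq₀s (by
          intro m j
          rw [one_zpow, one_mul, one_mul]
          exact isConj_zpow hcj₀ j)
      exact ⟨ρ0, h1, h3⟩
    obtain ⟨ρ0, hρ0S, hρ0p⟩ := hρ0ex
    have hPρ : IsParts S ρ0 ρs := ⟨by rw [← hTset]; exact hρ0S, hρsS⟩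
    refine ⟨ρ0 * (List.ofFn ρs).prod, ?_⟩
    intro g
    obtain ⟨m, j, rfl⟩ := habgen g
    rw [(hφdec m j).1, (hψdec m j).1]
    rw [parts_mul hSdisj hPρ (hφdec m j).2, parts_inv hSdisj hPρ,
      parts_mul hSdisj (isParts_mul hPρ (hφdec m j).2) (isParts_inv hPρ)]
    have hkey0 : ρ0 * p₀ ^ j * ρ0⁻¹ = q₀ ^ j := by
      rw [← conj_zpow, hρ0p]
    rw [hkey0]
    congr 1
    refine congrArg List.prod (congrArg List.ofFn (funext fun i => ?_))
    show ρs i * ((σs i) ^ m * (p i) ^ j) * (ρs i)⁻¹ = (σs i) ^ m * (q i) ^ j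
    have h1 : ρs i * (σs i) ^ m * (ρs i)⁻¹ = (σs i) ^ m := by
      rw [← conj_zpow, hρσs i]
    have h2 : ρs i * (p i) ^ j * (ρs i)⁻¹ = (q i) ^ j := by
      rw [← conj_zpow, hρp i]
    calc ρs i * ((σs i) ^ m * (p i) ^ j) * (ρs i)⁻¹
        = (ρs i * (σs i) ^ m * (ρs i)⁻¹) * (ρs i * (p i) ^ j * (ρs i)⁻¹) := by group
      _ = (σs i) ^ m * (q i) ^ j := by rw [h1, h2]
end
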